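/- arXiv:1703.07496 — 6 statements merged into one kernel-verified Lean document; each statement's English description precedes it below -/
import Mathlib

section
/- For every β ∈ (0,1), the function φ is strictly decreasing on (0,1): if 0 < β < β' < 1 then φ(β) > φ(β'). -/
open MeasureTheory

/-- `I k β = ∫_0^∞ y^{-β} (log y)^k / (1+y) dy`. -/
noncomputable def I (k : ℕ) (β : ℝ) : ℝ :=
  ∫ y in Set.Ioi (0 : ℝ), y ^ (-β) * (Real.log y) ^ k / (1 + y)

/-- `φ(β) = I₁(β) / I₀(β)`. -/
noncomputable def phi (β : ℝ) : ℝ := I 1 β / I 0 β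

namespace Stmt1Aux

open Real Set
open scoped ENNReal

/-- The integrand. -/
noncomputable def J (k : ℕ) (β : ℝ) (y : ℝ) : ℝ :=
  y ^ (-β) * (Real.log y) ^ k / (1 + y)

lemma measJ (k : ℕ) (β : ℝ) : Measurable (J k β) := by
  unfold J
  have hrpow : Measurable (fun y : ℝ => y ^ (-β)) := by measurability
  exact (hrpow.mul (Real.measurable_log.pow_const k)).div (measurable_const.add measurable_id)

lemma integrable_master {β : ℝ} (h0 : 0 < β) (h1 : β < 1) :
    IntegrableOn (fun y : ℝ => y ^ (-β) * (1 + |Real.log y|) / (1 + y)) (Ioi (0:ℝ)) := by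
  have hmeas : Measurable (fun y : ℝ => y ^ (-β) * (1 + |Real.log y|) / (1 + y)) := by
    have hrpow : Measurable (fun y : ℝ => y ^ (-β)) := by measurability
    exact (hrpow.mul (measurable_const.add Real.measurable_log.abs)).div
      (measurable_const.add measurable_id)
  have hsplit : Ioc (0:ℝ) 1 ∪ Ioi (1:ℝ) = Ioi (0:ℝ) := Ioc_union_Ioi_eq_Ioi zero_le_one
  rw [← hsplit]
  apply IntegrableOn.union
  · -- on (0,1]
    set ε : ℝ := (1 - β) / 2 with hε
    have hε0 : 0 < ε := by rw [hε]; linarith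
    have hg : IntegrableOn
        (fun y : ℝ => y ^ (-β) + (1/ε) * y ^ (-(β + ε))) (Ioc (0:ℝ) 1) := by
      have i1 : IntegrableOn (fun y : ℝ => y ^ (-β)) (Ioc (0:ℝ) 1) := by
        rw [← intervalIntegrable_iff_integrableOn_Ioc_of_le zero_le_one]
        exact intervalIntegral.intervalIntegrable_rpow' (by linarith)
      have i2 : IntegrableOn (fun y : ℝ => y ^ (-(β + ε))) (Ioc (0:ℝ) 1) := by
        rw [← intervalIntegrable_iff_integrableOn_Ioc_of_le zero_le_one]
        exact intervalIntegral.intervalIntegrable_rpow' (by rw [hε]; ring_nf; linarith)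
      exact i1.add (i2.const_mul _)
    refine Integrable.mono' hg hmeas.aestronglyMeasurable ?_
    refine (ae_restrict_iff' measurableSet_Ioc).2 (Filter.Eventually.of_forall ?_)
    intro y hy
    have hy0 : 0 < y := hy.1
    have hy1 : y ≤ 1 := hy.2
    have hylog : |Real.log y| ≤ y ^ (-ε) / ε := by
      rw [abs_of_nonpos (Real.log_nonpos hy0.le hy1)]
      calc -Real.log y = Real.log y⁻¹ := (Real.log_inv y).symm
        _ ≤ (y⁻¹) ^ ε / ε := Real.log_le_rpow_div (by positivity) hε0
        _ = y ^ (-ε) / ε := by rw [Real.inv_rpow hy0.le, ← Real.rpow_neg hy0.le]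
    have h1y : (1:ℝ) ≤ 1 + y := by linarith
    rw [Real.norm_eq_abs]
    have hnn : 0 ≤ y ^ (-β) * (1 + |Real.log y|) / (1 + y) := by positivity
    rw [abs_of_nonneg hnn]
    have hb1 : y ^ (-β) * (1 + |Real.log y|) / (1 + y) ≤ y ^ (-β) * (1 + |Real.log y|) := by
      rw [div_le_iff₀ (by linarith)]
      exact le_mul_of_one_le_right (by positivity) h1y
    refine hb1.trans ?_
    have : y ^ (-β) * (1 + |Real.log y|) ≤ y ^ (-β) * (1 + y ^ (-ε) / ε) := by
      gcongr
    refine this.trans_eq ?_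
    rw [show (-(β + ε) : ℝ) = -β + -ε by ring, Real.rpow_add hy0]
    try ring
  · -- on (1,∞)
    set δ : ℝ := β / 2 with hδ
    have hδ0 : 0 < δ := by positivity
    have hg : IntegrableOn
        (fun y : ℝ => y ^ (-β - 1) + (1/δ) * y ^ (δ - β - 1)) (Ioi (1:ℝ)) := by
      have i1 : IntegrableOn (fun y : ℝ => y ^ (-β - 1)) (Ioi (1:ℝ)) :=
        integrableOn_Ioi_rpow_of_lt (by linarith) one_pos
      have i2 : IntegrableOn (fun y : ℝ => y ^ (δ - β - 1)) (Ioi (1:ℝ)) :=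
        integrableOn_Ioi_rpow_of_lt (by rw [hδ]; linarith) one_pos
      exact i1.add (i2.const_mul _)
    refine Integrable.mono' hg hmeas.aestronglyMeasurable ?_
    refine (ae_restrict_iff' measurableSet_Ioi).2 (Filter.Eventually.of_forall ?_)
    intro y hy
    have hy1 : 1 < y := hy
    have hy0 : 0 < y := by linarith
    have hylog : |Real.log y| ≤ y ^ δ / δ := by
      rw [abs_of_nonneg (Real.log_nonneg hy1.le)]
      exact Real.log_le_rpow_div hy0.le hδ0
    rw [Real.norm_eq_abs]
    have hnn : 0 ≤ y ^ (-β) * (1 + |Real.log y|) / (1 + y) := by positivity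
    rw [abs_of_nonneg hnn]
    have hb1 : y ^ (-β) * (1 + |Real.log y|) / (1 + y)
        ≤ y ^ (-β) * (1 + y ^ δ / δ) / y := by
      apply div_le_div₀ (by positivity) ?_ hy0 (by linarith)
      gcongr
    refine hb1.trans_eq ?_
    rw [show (-β - 1 : ℝ) = -β + (-1) by ring, show (δ - β - 1 : ℝ) = -β + δ + (-1) by ring,
      Real.rpow_add hy0, Real.rpow_add hy0, Real.rpow_add hy0, Real.rpow_neg_one]
    try field_simp
    try ring

lemma integrableJ {k : ℕ} (hk : k ≤ 1) {β : ℝ} (h0 : 0 < β) (h1 : β < 1) :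
    IntegrableOn (J k β) (Ioi (0:ℝ)) := by
  refine Integrable.mono' (integrable_master h0 h1)
    (measJ k β).aestronglyMeasurable ?_
  refine (ae_restrict_iff' measurableSet_Ioi).2 (Filter.Eventually.of_forall ?_)
  intro y hy
  have hy0 : (0:ℝ) < y := hy
  have h1y : (0:ℝ) < 1 + y := by linarith
  have hrn : 0 ≤ y ^ (-β) := Real.rpow_nonneg hy0.le _
  rw [Real.norm_eq_abs]
  unfold J
  rw [abs_div, abs_of_pos h1y, abs_mul, abs_of_nonneg hrn, abs_pow]
  gcongr
  interval_cases k
  · simpa using abs_nonneg (Real.log y)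
  · simp

lemma I0_pos {β : ℝ} (h0 : 0 < β) (h1 : β < 1) : 0 < I 0 β := by
  have hint : IntegrableOn (J 0 β) (Ioi (0:ℝ)) := integrableJ (by norm_num) h0 h1
  have hnn : 0 ≤ᵐ[volume.restrict (Ioi (0:ℝ))] (J 0 β) := by
    refine (ae_restrict_iff' measurableSet_Ioi).2 (Filter.Eventually.of_forall ?_)
    intro y hy
    have hy0 : (0:ℝ) < y := hy
    unfold J
    positivity
  have := (integral_pos_iff_support_of_nonneg_ae hnn hint).2 ?_
  · exact this
  · have hsub : Ioo (1:ℝ) 2 ⊆ Function.support (J 0 β) := by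
      intro y hy
      have hy0 : (0:ℝ) < y := by linarith [hy.1]
      have : 0 < J 0 β y := by unfold J; positivity
      exact this.ne'
    calc (0:ℝ≥0∞) < volume.restrict (Ioi (0:ℝ)) (Ioo (1:ℝ) 2) := by
          rw [Measure.restrict_apply measurableSet_Ioo]
          rw [show Ioo (1:ℝ) 2 ∩ Ioi 0 = Ioo 1 2 by
            refine inter_eq_left.2 fun y hy => ?_; exact lt_trans one_pos hy.1]
          simp [Real.volume_Ioo]
          try norm_num
      _ ≤ _ := measure_mono hsub

lemma key {β β' : ℝ} (hβ : β ∈ Ioo (0:ℝ) 1) (hβ' : β' ∈ Ioo (0:ℝ) 1) (hlt : β < β') :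
    I 1 β' * I 0 β < I 1 β * I 0 β' := by
  set μ := volume.restrict (Ioi (0:ℝ)) with hμ
  set δ : ℝ := β' - β with hδdef
  have hδ0 : 0 < δ := by simp [hδdef]; linarith
  have hJ1β : Integrable (J 1 β) μ := integrableJ le_rfl hβ.1 hβ.2
  have hJ1β' : Integrable (J 1 β') μ := integrableJ le_rfl hβ'.1 hβ'.2
  have hJ0β : Integrable (J 0 β) μ := integrableJ zero_le_one hβ.1 hβ.2
  have hJ0β' : Integrable (J 0 β') μ := integrableJ zero_le_one hβ'.1 hβ'.2
  set H : ℝ × ℝ → ℝ := fun z => J 1 β z.1 * J 0 β' z.2 - J 1 β' z.1 * J 0 β z.2 with hH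
  have hint1 : Integrable (fun z : ℝ × ℝ => J 1 β z.1 * J 0 β' z.2) (μ.prod μ) :=
    hJ1β.mul_prod hJ0β'
  have hint2 : Integrable (fun z : ℝ × ℝ => J 1 β' z.1 * J 0 β z.2) (μ.prod μ) :=
    hJ1β'.mul_prod hJ0β
  have hintH : Integrable H (μ.prod μ) := hint1.sub hint2
  have hintHs : Integrable (fun z : ℝ × ℝ => H z.swap) (μ.prod μ) := hintH.swap
  have hD : ∫ z, H z ∂(μ.prod μ) = I 1 β * I 0 β' - I 1 β' * I 0 β := by
    rw [hH]
    rw [integral_sub hint1 hint2, integral_prod_mul, integral_prod_mul]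
    rfl
  have hDs : ∫ z, H z.swap ∂(μ.prod μ) = I 1 β * I 0 β' - I 1 β' * I 0 β := by
    rw [← hD]
    exact integral_prod_swap H
  set S : ℝ × ℝ → ℝ := fun z => H z + H z.swap with hS
  have hintS : Integrable S (μ.prod μ) := hintH.add hintHs
  have hSform : ∀ x ∈ Ioi (0:ℝ), ∀ y ∈ Ioi (0:ℝ),
      S (x, y) = (x ^ δ - y ^ δ) * (Real.log x - Real.log y) *
        (x ^ (-β') * y ^ (-β') / ((1 + x) * (1 + y))) := by
    intro x hx y hy
    have hx0 : (0:ℝ) < x := hx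
    have hy0 : (0:ℝ) < y := hy
    have h1x : (0:ℝ) < 1 + x := by linarith
    have h1y : (0:ℝ) < 1 + y := by linarith
    have hxr : x ^ (-β) = x ^ (-β') * x ^ δ := by
      rw [← Real.rpow_add hx0]; congr 1; simp [hδdef]; ring
    have hyr : y ^ (-β) = y ^ (-β') * y ^ δ := by
      rw [← Real.rpow_add hy0]; congr 1; simp [hδdef]; ring
    simp only [hS, hH, J, Prod.swap, pow_one, pow_zero, mul_one]
    rw [hxr, hyr]
    field_simp
    ring
  have hSnn : 0 ≤ᵐ[μ.prod μ] S := by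
    have hprod : μ.prod μ = (volume.prod volume).restrict (Ioi (0:ℝ) ×ˢ Ioi (0:ℝ)) := by
      rw [hμ, Measure.prod_restrict]
    rw [hprod]
    refine (ae_restrict_iff' (measurableSet_Ioi.prod measurableSet_Ioi)).2
      (Filter.Eventually.of_forall ?_)
    rintro ⟨x, y⟩ ⟨hx, hy⟩
    have hx0 : (0:ℝ) < x := hx
    have hy0 : (0:ℝ) < y := hy
    rw [hSform x hx y hy]
    have hpos : 0 ≤ x ^ (-β') * y ^ (-β') / ((1 + x) * (1 + y)) := by positivity
    refine mul_nonneg ?_ hpos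
    rcases le_total x y with h | h
    · have h1 : x ^ δ - y ^ δ ≤ 0 := by
        have := Real.rpow_le_rpow hx0.le h hδ0.le; linarith
      have h2 : Real.log x - Real.log y ≤ 0 := by
        have := Real.log_le_log hx0 h; linarith
      exact mul_nonneg_iff.2 (Or.inr ⟨h1, h2⟩)
    · have h1 : 0 ≤ x ^ δ - y ^ δ := by
        have := Real.rpow_le_rpow hy0.le h hδ0.le; linarith
      have h2 : 0 ≤ Real.log x - Real.log y := by
        have := Real.log_le_log hy0 h; linarith
      exact mul_nonneg h1 h2
  have hSpos : 0 < ∫ z, S z ∂(μ.prod μ) := by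
    refine (integral_pos_iff_support_of_nonneg_ae hSnn hintS).2 ?_
    have hsub : Ioo (2:ℝ) 3 ×ˢ Ioo (4:ℝ) 5 ⊆ Function.support S := by
      rintro ⟨x, y⟩ ⟨hx, hy⟩
      have hx0 : (0:ℝ) < x := by linarith [hx.1]
      have hy0 : (0:ℝ) < y := by linarith [hy.1]
      have hxy : x < y := by linarith [hx.2, hy.1]
      have : 0 < S (x, y) := by
        rw [hSform x hx0 y hy0]
        have hpos : 0 < x ^ (-β') * y ^ (-β') / ((1 + x) * (1 + y)) := by positivity
        refine mul_pos ?_ hpos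
        have h1 : x ^ δ - y ^ δ < 0 := by
          have := Real.rpow_lt_rpow hx0.le hxy hδ0; linarith
        have h2 : Real.log x - Real.log y < 0 := by
          have := Real.log_lt_log hx0 hxy; linarith
        exact mul_pos_of_neg_of_neg h1 h2
      exact this.ne'
    calc (0:ℝ≥0∞) < μ.prod μ (Ioo (2:ℝ) 3 ×ˢ Ioo (4:ℝ) 5) := by
          rw [Measure.prod_prod, hμ, Measure.restrict_apply measurableSet_Ioo,
            Measure.restrict_apply measurableSet_Ioo]
          rw [show Ioo (2:ℝ) 3 ∩ Ioi 0 = Ioo 2 3 by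
              refine inter_eq_left.2 fun y hy => ?_
              exact lt_trans (by norm_num) hy.1,
            show Ioo (4:ℝ) 5 ∩ Ioi 0 = Ioo 4 5 by
              refine inter_eq_left.2 fun y hy => ?_
              exact lt_trans (by norm_num) hy.1]
          simp [Real.volume_Ioo]
          try norm_num
      _ ≤ _ := measure_mono hsub
  have hsum : ∫ z, S z ∂(μ.prod μ) = 2 * (I 1 β * I 0 β' - I 1 β' * I 0 β) := by
    rw [hS]
    rw [integral_add hintH hintHs, hD, hDs]
    ring
  rw [hsum] at hSpos
  linarith

end Stmt1Aux

/-- The function `φ` is strictly decreasing on `(0,1)`. -/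
theorem stmt1 : StrictAntiOn phi (Set.Ioo (0 : ℝ) 1) := by
  intro β hβ β' hβ' hlt
  unfold phi
  rw [div_lt_div_iff₀ (Stmt1Aux.I0_pos hβ'.1 hβ'.2) (Stmt1Aux.I0_pos hβ.1 hβ.2)]
  exact Stmt1Aux.key hβ hβ' hlt
end

section
/- The function φ is differentiable on (0,1), with derivative φ'(β) = (I_1(β)² − I_0(β) I_2(β)) / I_0(β)², and φ'(β) < 0 for every β ∈ (0,1); in particular I_1(β)² < I_0(β) I_2(β) for every β ∈ (0,1). -/
open MeasureTheory

open Set Metric Real Filter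
open scoped ENNReal

lemma contOn (c : ℝ) (k : ℕ) :
    ContinuousOn (fun y : ℝ => y ^ (-c) * Real.log y ^ k / (1 + y)) (Set.Ioi 0) := by
  apply ContinuousOn.div
  · exact ContinuousOn.mul
      (fun y hy => (Real.continuousAt_rpow_const y (-c) (Or.inl (ne_of_gt hy))).continuousWithinAt)
      ((Real.continuousOn_log.mono (fun y hy => by simpa using (ne_of_gt hy))).pow k)
  · exact (continuous_const.add continuous_id).continuousOn
  · intro y hy h
    have : (0:ℝ) < y := hy
    linarith

lemma contOnAbs (c : ℝ) (k : ℕ) :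
    ContinuousOn (fun y : ℝ => y ^ (-c) * |Real.log y| ^ k / (1 + y)) (Set.Ioi 0) := by
  apply ContinuousOn.div
  · exact ContinuousOn.mul
      (fun y hy => (Real.continuousAt_rpow_const y (-c) (Or.inl (ne_of_gt hy))).continuousWithinAt)
      (((Real.continuousOn_log.mono (fun y hy => by simpa using (ne_of_gt hy))).abs).pow k)
  · exact (continuous_const.add continuous_id).continuousOn
  · intro y hy h
    have : (0:ℝ) < y := hy
    linarith

lemma abs_integrable (c : ℝ) (hc0 : 0 < c) (hc1 : c < 1) (k : ℕ) :
    IntegrableOn (fun y : ℝ => y ^ (-c) * |Real.log y| ^ k / (1 + y)) (Set.Ioi 0) := by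
  have key : Set.Ioc (0:ℝ) 1 ∪ Set.Ioi 1 = Set.Ioi 0 := Set.Ioc_union_Ioi_eq_Ioi zero_le_one
  rw [← key]
  apply IntegrableOn.union
  · -- on (0,1]
    set ε : ℝ := (1 - c) / (k + 1) with hε
    have hε0 : 0 < ε := div_pos (by linarith) (by positivity)
    have hεk : ε * k < 1 - c := by
      have h1 : ε * (k + 1) = 1 - c := by
        rw [hε, div_mul_cancel₀ _ (by positivity : ((k:ℝ) + 1) ≠ 0)]
      nlinarith [hε0]
    have hint : IntegrableOn (fun y : ℝ => (ε ^ k)⁻¹ * y ^ (-c - ε * k)) (Set.Ioc 0 1) := by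
      apply Integrable.const_mul
      apply IntegrableOn.mono_set (t := Set.Ioo (0:ℝ) 2)
      · exact (intervalIntegral.integrableOn_Ioo_rpow_iff (by norm_num)).2 (by linarith)
      · exact fun y hy => ⟨hy.1, by linarith [hy.2]⟩
    apply hint.mono'
      (((contOnAbs c k).mono (fun y hy => hy.1)).aestronglyMeasurable measurableSet_Ioc)
    filter_upwards [ae_restrict_mem measurableSet_Ioc] with y hy
    have hy0 : (0:ℝ) < y := hy.1
    have hy1 : y ≤ 1 := hy.2
    have hlog : |Real.log y| ≤ y ^ (-ε) / ε := by
      have h1 : |Real.log y| = Real.log y⁻¹ := by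
        rw [Real.log_inv, abs_of_nonpos (Real.log_nonpos hy0.le hy1)]
      rw [h1]
      calc Real.log y⁻¹ ≤ (y⁻¹) ^ ε / ε := Real.log_le_rpow_div (by positivity) hε0
        _ = y ^ (-ε) / ε := by rw [← Real.rpow_neg_one y, ← Real.rpow_mul hy0.le]; norm_num
    have hA : (y ^ (-ε) / ε) ^ k = y ^ (-ε * (k:ℝ)) / ε ^ k := by
      rw [div_pow, ← Real.rpow_natCast (y ^ (-ε)) k, ← Real.rpow_mul hy0.le]
    have hnn : 0 ≤ y ^ (-c) * |Real.log y| ^ k / (1 + y) := by positivity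
    rw [Real.norm_eq_abs, abs_of_nonneg hnn]
    calc y ^ (-c) * |Real.log y| ^ k / (1 + y)
        ≤ y ^ (-c) * (y ^ (-ε) / ε) ^ k / 1 := by
          apply div_le_div₀ (by positivity)
            (mul_le_mul_of_nonneg_left (pow_le_pow_left₀ (abs_nonneg _) hlog k) (by positivity))
            one_pos (by linarith)
      _ = (ε ^ k)⁻¹ * y ^ (-c - ε * k) := by
          rw [hA, div_one, show -c - ε * (k:ℝ) = -c + (-ε * (k:ℝ)) by ring,
            Real.rpow_add hy0]
          ring
  · -- on (1,∞)
    set ε : ℝ := c / (k + 1) with hε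
    have hε0 : 0 < ε := by positivity
    have hεk : ε * k < c := by
      have h1 : ε * (k + 1) = c := by
        rw [hε, div_mul_cancel₀ _ (by positivity : ((k:ℝ) + 1) ≠ 0)]
      nlinarith [hε0]
    have hint : IntegrableOn (fun y : ℝ => (ε ^ k)⁻¹ * y ^ (-c + ε * k - 1)) (Set.Ioi 1) := by
      exact (integrableOn_Ioi_rpow_of_lt (by linarith) one_pos).const_mul _
    apply hint.mono'
      (((contOnAbs c k).mono (fun y hy => lt_trans (zero_lt_one' ℝ) hy)).aestronglyMeasurable
        measurableSet_Ioi)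
    filter_upwards [ae_restrict_mem measurableSet_Ioi] with y hy
    have hy1 : (1:ℝ) < y := hy
    have hy0 : (0:ℝ) < y := by linarith
    have hlog : |Real.log y| ≤ y ^ ε / ε := by
      rw [abs_of_nonneg (Real.log_nonneg hy1.le)]
      exact Real.log_le_rpow_div hy0.le hε0
    have hA : (y ^ ε / ε) ^ k = y ^ (ε * (k:ℝ)) / ε ^ k := by
      rw [div_pow, ← Real.rpow_natCast (y ^ ε) k, ← Real.rpow_mul hy0.le]
    have hnn : 0 ≤ y ^ (-c) * |Real.log y| ^ k / (1 + y) := by positivity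
    rw [Real.norm_eq_abs, abs_of_nonneg hnn]
    calc y ^ (-c) * |Real.log y| ^ k / (1 + y)
        ≤ y ^ (-c) * (y ^ ε / ε) ^ k / y := by
          apply div_le_div₀ (by positivity)
            (mul_le_mul_of_nonneg_left (pow_le_pow_left₀ (abs_nonneg _) hlog k) (by positivity))
            hy0 (by linarith)
      _ = (ε ^ k)⁻¹ * y ^ (-c + ε * k - 1) := by
          rw [hA, show -c + ε * (k:ℝ) - 1 = -c + ε * (k:ℝ) + (-1) by ring,
            Real.rpow_add hy0, Real.rpow_add hy0, Real.rpow_neg_one]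
          field_simp

lemma integrable_f (c : ℝ) (hc0 : 0 < c) (hc1 : c < 1) (k : ℕ) :
    IntegrableOn (fun y : ℝ => y ^ (-c) * Real.log y ^ k / (1 + y)) (Set.Ioi 0) := by
  apply (abs_integrable c hc0 hc1 k).mono'
    ((contOn c k).aestronglyMeasurable measurableSet_Ioi)
  filter_upwards [ae_restrict_mem measurableSet_Ioi] with y hy
  have hy0 : (0:ℝ) < y := hy
  rw [Real.norm_eq_abs, abs_div, abs_mul, abs_pow, abs_of_nonneg (Real.rpow_nonneg hy0.le _),
    abs_of_pos (by linarith : (0:ℝ) < 1 + y)]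

lemma hasDerivAt_I (k : ℕ) (β : ℝ) (hβ : β ∈ Set.Ioo (0:ℝ) 1) :
    HasDerivAt (fun b => I k b) (-(I (k+1) β)) β := by
  obtain ⟨h0, h1⟩ := hβ
  have hmin : 0 < min β (1 - β) := lt_min h0 (by linarith)
  set δ : ℝ := min β (1 - β) / 2 with hδdef
  have hδ0 : 0 < δ := by positivity
  set a := β - δ with hadef
  set b := β + δ with hbdef
  have hδβ : δ ≤ β / 2 := by
    have := min_le_left β (1 - β); rw [hδdef]; linarith
  have hδβ' : δ ≤ (1 - β) / 2 := by
    have := min_le_right β (1 - β); rw [hδdef]; linarith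
  have ha0 : 0 < a := by rw [hadef]; linarith
  have ha1 : a < 1 := by rw [hadef]; linarith
  have hb0 : 0 < b := by rw [hbdef]; linarith
  have hb1 : b < 1 := by rw [hbdef]; linarith
  have key := hasDerivAt_integral_of_dominated_loc_of_deriv_le
    (F := fun (x : ℝ) (y : ℝ) => y ^ (-x) * Real.log y ^ k / (1 + y))
    (F' := fun (x : ℝ) (y : ℝ) => -(y ^ (-x) * Real.log y ^ (k+1) / (1 + y)))
    (μ := volume.restrict (Set.Ioi 0)) (x₀ := β)
    (bound := fun y => (y ^ (-a) + y ^ (-b)) * |Real.log y| ^ (k+1) / (1 + y))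
    (ball_mem_nhds β hδ0)
    (Eventually.of_forall fun x =>
      ((contOn x k).aestronglyMeasurable measurableSet_Ioi))
    (integrable_f β h0 h1 k)
    (((contOn β (k+1)).neg).aestronglyMeasurable measurableSet_Ioi)
    ?_ ?_ ?_
  · have h2 := key.2
    have : (∫ y in Set.Ioi (0:ℝ), -(y ^ (-β) * Real.log y ^ (k+1) / (1 + y)))
        = -(I (k+1) β) := by
      rw [integral_neg]; rfl
    rw [this] at h2
    exact h2
  · -- bound
    filter_upwards [ae_restrict_mem measurableSet_Ioi] with y hy x hx
    have hy0 : (0:ℝ) < y := hy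
    rw [mem_ball, Real.dist_eq] at hx
    have hax : a ≤ x := by have := abs_lt.1 hx; rw [hadef]; linarith [this.1]
    have hxb : x ≤ b := by have := abs_lt.1 hx; rw [hbdef]; linarith [this.2]
    have hnum : y ^ (-x) ≤ y ^ (-a) + y ^ (-b) := by
      rcases le_or_gt 1 y with hy1 | hy1
      · have : y ^ (-x) ≤ y ^ (-a) :=
          Real.rpow_le_rpow_of_exponent_le hy1 (by linarith)
        have hb' : 0 ≤ y ^ (-b) := Real.rpow_nonneg hy0.le _
        linarith
      · have : y ^ (-x) ≤ y ^ (-b) :=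
          Real.rpow_le_rpow_of_exponent_ge hy0 hy1.le (by linarith)
        have ha' : 0 ≤ y ^ (-a) := Real.rpow_nonneg hy0.le _
        linarith
    rw [norm_neg, Real.norm_eq_abs, abs_div, abs_mul, abs_pow,
      abs_of_nonneg (Real.rpow_nonneg hy0.le _), abs_of_pos (by linarith : (0:ℝ) < 1 + y)]
    exact div_le_div₀ (by positivity) (mul_le_mul_of_nonneg_right hnum (by positivity))
      (by linarith) le_rfl
  · -- bound integrable
    have hsum := (abs_integrable a ha0 ha1 (k+1)).add (abs_integrable b hb0 hb1 (k+1))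
    apply hsum.congr
    filter_upwards [] with y
    simp only [Pi.add_apply]
    ring
  · -- differentiability
    filter_upwards [ae_restrict_mem measurableSet_Ioi] with y hy x hx
    have hy0 : (0:ℝ) < y := hy
    have hexp : ∀ t : ℝ, y ^ (-t) = Real.exp (-t * Real.log y) := fun t => by
      rw [Real.rpow_def_of_pos hy0, mul_comm]
    have h1' : HasDerivAt (fun t : ℝ => -t * Real.log y) (-Real.log y) x := by
      simpa using ((hasDerivAt_id x).neg.mul_const (Real.log y))
    have H : HasDerivAt (fun t : ℝ => Real.exp (-t * Real.log y))
        (Real.exp (-x * Real.log y) * -Real.log y) x := h1'.exp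
    have H2 := (H.mul_const (Real.log y ^ k)).div_const (1 + y)
    have heq : (fun t : ℝ => y ^ (-t) * Real.log y ^ k / (1 + y))
        = fun t : ℝ => Real.exp (-t * Real.log y) * Real.log y ^ k / (1 + y) := by
      funext t; rw [hexp]
    rw [heq]
    refine H2.congr_deriv ?_
    rw [← hexp, pow_succ]
    ring

lemma I0_pos (β : ℝ) (hβ : β ∈ Set.Ioo (0:ℝ) 1) : 0 < I 0 β := by
  obtain ⟨h0, h1⟩ := hβ
  rw [I]
  refine (setIntegral_pos_iff_support_of_nonneg_ae ?_ (integrable_f β h0 h1 0)).2 ?_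
  · filter_upwards [ae_restrict_mem measurableSet_Ioi] with y hy
    have hy0 : (0:ℝ) < y := hy
    have : (0:ℝ) < y ^ (-β) * Real.log y ^ 0 / (1 + y) := by
      rw [pow_zero]
      have := Real.rpow_pos_of_pos hy0 (-β)
      positivity
    exact this.le
  · have hne : Set.Ioi (0:ℝ) ⊆
        Function.support (fun y : ℝ => y ^ (-β) * Real.log y ^ 0 / (1 + y)) := by
      intro y hy
      have hy0 : (0:ℝ) < y := hy
      simp only [Function.mem_support, pow_zero]
      have := Real.rpow_pos_of_pos hy0 (-β)
      positivity
    calc (0:ℝ≥0∞) < volume (Set.Ioi (0:ℝ)) := by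
          rw [Real.volume_Ioi]; exact ENNReal.zero_lt_top
      _ ≤ volume (Function.support (fun y : ℝ => y ^ (-β) * Real.log y ^ 0 / (1 + y))
            ∩ Set.Ioi 0) := measure_mono (Set.subset_inter hne Set.Subset.rfl)

lemma key_ineq (β : ℝ) (hβ : β ∈ Set.Ioo (0:ℝ) 1) : I 1 β ^ 2 < I 0 β * I 2 β := by
  obtain ⟨h0, h1⟩ := hβ
  have hI0 := I0_pos β ⟨h0, h1⟩
  set m : ℝ := I 1 β / I 0 β with hm
  have hmI : m * I 0 β = I 1 β := div_mul_cancel₀ _ (ne_of_gt hI0)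
  have hf0 := integrable_f β h0 h1 0
  have hf1 := integrable_f β h0 h1 1
  have hf2 := integrable_f β h0 h1 2
  have heq : (fun y : ℝ => y ^ (-β) * (Real.log y - m) ^ 2 / (1 + y))
      = fun y : ℝ => (y ^ (-β) * Real.log y ^ 2 / (1 + y)
          - (2 * m) * (y ^ (-β) * Real.log y ^ 1 / (1 + y)))
          + m ^ 2 * (y ^ (-β) * Real.log y ^ 0 / (1 + y)) := by
    funext y; ring
  have hint : IntegrableOn (fun y : ℝ => y ^ (-β) * (Real.log y - m) ^ 2 / (1 + y))
      (Set.Ioi 0) := by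
    rw [heq]
    exact (hf2.sub (hf1.const_mul _)).add (hf0.const_mul _)
  have hval : ∫ y in Set.Ioi (0:ℝ), y ^ (-β) * (Real.log y - m) ^ 2 / (1 + y)
      = I 2 β - 2 * m * I 1 β + m ^ 2 * I 0 β := by
    have h12 : IntegrableOn (fun y : ℝ => y ^ (-β) * Real.log y ^ 2 / (1 + y)
        - 2 * m * (y ^ (-β) * Real.log y ^ 1 / (1 + y))) (Set.Ioi 0) :=
      hf2.sub (hf1.const_mul (2*m))
    rw [heq, integral_add h12 (hf0.const_mul (m^2)),
      integral_sub hf2 (hf1.const_mul (2*m)), integral_const_mul, integral_const_mul]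
    simp only [I]
  have hpos : 0 < ∫ y in Set.Ioi (0:ℝ), y ^ (-β) * (Real.log y - m) ^ 2 / (1 + y) := by
    refine (setIntegral_pos_iff_support_of_nonneg_ae ?_ hint).2 ?_
    · filter_upwards [ae_restrict_mem measurableSet_Ioi] with y hy
      have hy0 : (0:ℝ) < y := hy
      have h1y : (0:ℝ) < 1 + y := by linarith
      have := Real.rpow_nonneg hy0.le (-β)
      positivity
    · have hne : Set.Ioi (0:ℝ) \ {Real.exp m} ⊆
          Function.support (fun y : ℝ => y ^ (-β) * (Real.log y - m) ^ 2 / (1 + y))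
            ∩ Set.Ioi 0 := by
        rintro y ⟨hy, hym⟩
        have hy0 : (0:ℝ) < y := hy
        refine ⟨?_, hy⟩
        simp only [Function.mem_support]
        have hlog : Real.log y - m ≠ 0 := by
          intro h
          apply hym
          have : Real.log y = m := by linarith
          rw [Set.mem_singleton_iff, ← this, Real.exp_log hy0]
        have h1y : (0:ℝ) < 1 + y := by linarith
        have hr := Real.rpow_pos_of_pos hy0 (-β)
        positivity
      calc (0:ℝ≥0∞) < volume (Set.Ioi (0:ℝ) \ {Real.exp m}) := by
            rw [measure_diff_null (measure_singleton _), Real.volume_Ioi]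
            exact ENNReal.zero_lt_top
        _ ≤ _ := measure_mono hne
  rw [hval] at hpos
  have h2 : 0 < (I 2 β - 2 * m * I 1 β + m ^ 2 * I 0 β) * I 0 β := mul_pos hpos hI0
  have h3 : (I 2 β - 2 * m * I 1 β + m ^ 2 * I 0 β) * I 0 β
      = I 0 β * I 2 β - I 1 β ^ 2 := by
    rw [← hmI]; ring
  linarith

/-- `φ` is differentiable on `(0,1)` with
`φ'(β) = (I₁(β)² − I₀(β) I₂(β)) / I₀(β)² < 0`; in particular
`I₁(β)² < I₀(β) I₂(β)`. -/
theorem stmt2 :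
    ∀ β ∈ Set.Ioo (0 : ℝ) 1,
      HasDerivAt phi ((I 1 β ^ 2 - I 0 β * I 2 β) / (I 0 β) ^ 2) β ∧
      (I 1 β ^ 2 - I 0 β * I 2 β) / (I 0 β) ^ 2 < 0 ∧
      I 1 β ^ 2 < I 0 β * I 2 β := by
  intro β hβ
  have hI0 := I0_pos β hβ
  have key := key_ineq β hβ
  have hd0 := hasDerivAt_I 0 β hβ
  have hd1 := hasDerivAt_I 1 β hβ
  have hder : HasDerivAt phi
      ((-(I 2 β) * I 0 β - I 1 β * -(I 1 β)) / I 0 β ^ 2) β := hd1.div hd0 (ne_of_gt hI0)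
  refine ⟨?_, ?_, key⟩
  · convert hder using 1
    ring
  · apply div_neg_of_neg_of_pos
    · linarith
    · positivity
end

section
/- Let (C_j)_{j∈ℕ} be i.i.d. random variables with values in (0,∞) such that log C_1 is integrable. If E[log C_1] < 0, then the random series ∑_{n=1}^∞ ∏_{j=1}^n C_j converges (is finite) almost surely. If E[log C_1] ≥ 0, then ∑_{n=1}^∞ ∏_{j=1}^n C_j = ∞ almost surely. -/
open MeasureTheory Filter ProbabilityTheory
open scoped ENNReal

namespace Stmt4Aux

variable {Ω : Type*} {mΩ : MeasurableSpace Ω} (C : ℕ → Ω → ℝ)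

/-- The shifted random series `∑_{n≥0} ∏_{j=0}^{n} C_{j+k}`. -/
noncomputable def W (k : ℕ) (ω : Ω) : ℝ≥0∞ :=
  ∑' n : ℕ, ENNReal.ofReal (∏ j ∈ Finset.range (n + 1), C (j + k) ω)

/-- Partial sums of the shifted random series. -/
noncomputable def F (k N : ℕ) (ω : Ω) : ℝ≥0∞ :=
  ∑ n ∈ Finset.range N, ENNReal.ofReal (∏ j ∈ Finset.range (n + 1), C (j + k) ω)

/-- Partial sums as a function of the first `N` coordinates. -/
noncomputable def G (N : ℕ) (v : Fin N → ℝ) : ℝ≥0∞ :=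
  ∑ n ∈ Finset.range N, ENNReal.ofReal
    (∏ j ∈ Finset.range (n + 1), if h : j < N then v ⟨j, h⟩ else 1)

omit mΩ in
theorem W_succ (hpos : ∀ j ω, 0 < C j ω) (k : ℕ) (ω : Ω) :
    W C k ω = ENNReal.ofReal (C k ω) * (1 + W C (k + 1) ω) := by
  have h0 : ∀ n : ℕ, ∏ j ∈ Finset.range (n + 1 + 1), C (j + k) ω
      = C k ω * ∏ j ∈ Finset.range (n + 1), C (j + (k + 1)) ω := by
    intro n
    rw [Finset.prod_range_succ']
    simp only [Nat.zero_add, mul_comm]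
    congr 1
    apply Finset.prod_congr rfl
    intro j _
    congr 1
    omega
  have key : (∑' n : ℕ, ENNReal.ofReal (∏ j ∈ Finset.range (n + 1 + 1), C (j + k) ω))
      = ENNReal.ofReal (C k ω) * W C (k + 1) ω := by
    rw [W, ← ENNReal.tsum_mul_left]
    exact tsum_congr fun n => by rw [h0 n, ENNReal.ofReal_mul (hpos k ω).le]
  rw [W, tsum_eq_zero_add' ENNReal.summable, key]
  simp only [Nat.zero_add, Finset.range_one, Finset.prod_singleton]
  ring

omit mΩ in
theorem W_top_iff (hpos : ∀ j ω, 0 < C j ω) (k : ℕ) (ω : Ω) :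
    W C k ω = ⊤ ↔ W C (k + 1) ω = ⊤ := by
  rw [W_succ C hpos k ω]
  constructor
  · intro h
    rcases ENNReal.mul_eq_top.1 h with ⟨_, h2⟩ | ⟨h1, _⟩
    · rcases (by simpa using h2 : (1 : ℝ≥0∞) = ⊤ ∨ W C (k + 1) ω = ⊤) with h | h
      · simp at h
      · exact h
    · exact absurd h1 ENNReal.ofReal_ne_top
  · intro h
    rw [h, ENNReal.mul_eq_top]
    left
    exact ⟨by simpa using hpos k ω, by simp⟩

omit mΩ in
theorem W_top_iff' (hpos : ∀ j ω, 0 < C j ω) (k : ℕ) (ω : Ω) :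
    W C 0 ω = ⊤ ↔ W C k ω = ⊤ := by
  induction k with
  | zero => rfl
  | succ n ih => rw [ih, W_top_iff C hpos]

theorem W_meas (hmeas : ∀ j, Measurable (C j)) (k : ℕ) : Measurable (W C k) := by
  apply Measurable.ennreal_tsum
  intro n
  apply Measurable.ennreal_ofReal
  exact Finset.measurable_prod _ (fun j _ => hmeas _)

theorem F_meas (hmeas : ∀ j, Measurable (C j)) (k N : ℕ) : Measurable (F C k N) := by
  apply Finset.measurable_sum
  intro n _
  apply Measurable.ennreal_ofReal
  exact Finset.measurable_prod _ (fun j _ => hmeas _)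

theorem G_measurable (N : ℕ) : Measurable (G N) := by
  apply Finset.measurable_sum
  intro n _
  apply Measurable.ennreal_ofReal
  apply Finset.measurable_prod
  intro j _
  by_cases h : j < N
  · simp only [dif_pos h]
    exact measurable_pi_apply _
  · simp only [dif_neg h]
    exact measurable_const

omit mΩ in
theorem F_eq (k N : ℕ) (ω : Ω) : F C k N ω = G N (fun i : Fin N => C (i + k) ω) := by
  unfold F G
  apply Finset.sum_congr rfl
  intro n hn
  congr 1
  apply Finset.prod_congr rfl
  intro j hj
  have hjN : j < N := lt_of_lt_of_le (Finset.mem_range.1 hj) (Finset.mem_range.1 hn)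
  rw [dif_pos hjN]

omit mΩ in
theorem W_le_iff (k : ℕ) (ω : Ω) (a : ℝ≥0∞) : W C k ω ≤ a ↔ ∀ N, F C k N ω ≤ a := by
  rw [W, ENNReal.tsum_eq_iSup_nat, iSup_le_iff]
  rfl

omit mΩ in
theorem F_mono (k : ℕ) (ω : Ω) : Monotone (fun N => F C k N ω) := by
  intro N M h
  exact Finset.sum_le_sum_of_subset (Finset.range_subset_range.2 h)

theorem map_eq_pi (P : Measure Ω) [IsProbabilityMeasure P] (hmeas : ∀ j, Measurable (C j))
    (hindep : iIndepFun C P)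
    (hident : ∀ j, IdentDistrib (C j) (C 0) P P) (k N : ℕ) :
    Measure.map (fun ω (i : Fin N) => C (i + k) ω) P
      = Measure.pi (fun _ : Fin N => Measure.map (C 0) P) := by
  have hvm : Measurable (fun ω (i : Fin N) => C ((i : ℕ) + k) ω) :=
    measurable_pi_lambda _ fun i => hmeas _
  refine (Measure.pi_eq fun s hs => ?_).symm
  rw [Measure.map_apply hvm (MeasurableSet.univ_pi hs)]
  classical
  set sets : ℕ → Set ℝ := fun m =>
    if h : k ≤ m ∧ m - k < N then s ⟨m - k, h.2⟩ else Set.univ with hsets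
  have hsets_meas : ∀ m, MeasurableSet (sets m) := by
    intro m
    rw [hsets]
    dsimp only
    by_cases h : k ≤ m ∧ m - k < N
    · rw [dif_pos h]; exact hs _
    · rw [dif_neg h]; exact MeasurableSet.univ
  have hsets_eval : ∀ i : Fin N, sets ((i : ℕ) + k) = s i := by
    intro i
    have h : k ≤ (i : ℕ) + k ∧ (i : ℕ) + k - k < N := by
      constructor
      · omega
      · simpa using i.2
    rw [hsets]
    simp only [dif_pos h]
    congr 1
    ext
    simp
  set T : Finset ℕ := Finset.image (fun i : Fin N => (i : ℕ) + k) Finset.univ with hT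
  have hinj : Function.Injective (fun i : Fin N => (i : ℕ) + k) := by
    intro a b hab
    simp only at hab
    exact Fin.ext (by omega)
  have hpre : (fun ω (i : Fin N) => C ((i : ℕ) + k) ω) ⁻¹' Set.pi Set.univ s
      = ⋂ m ∈ T, C m ⁻¹' sets m := by
    ext ω
    simp only [Set.mem_preimage, Set.mem_pi, Set.mem_univ, forall_true_left, Set.mem_iInter, hT,
      Finset.mem_image, Finset.mem_univ, true_and]
    constructor
    · rintro h m ⟨i, rfl⟩
      rw [hsets_eval i]
      exact h i
    · intro h i
      have := h ((i : ℕ) + k) ⟨i, rfl⟩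
      rwa [hsets_eval i] at this
  rw [hpre, hindep.measure_inter_preimage_eq_mul T (fun m _ => hsets_meas m),
    Finset.prod_image (fun a _ b _ hab => hinj hab)]
  apply Finset.prod_congr rfl
  intro i _
  rw [hsets_eval i, Measure.map_apply (hmeas 0) (hs i)]
  exact (hident _).measure_mem_eq (hs i)

theorem identDistrib_W (P : Measure Ω) [IsProbabilityMeasure P]
    (hmeas : ∀ j, Measurable (C j))
    (hindep : iIndepFun C P)
    (hident : ∀ j, IdentDistrib (C j) (C 0) P P) :
    IdentDistrib (W C 0) (W C 1) P P := by
  have hFid : ∀ N, IdentDistrib (F C 0 N) (F C 1 N) P P := by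
    intro N
    have hvm : ∀ k, Measurable (fun ω (i : Fin N) => C ((i : ℕ) + k) ω) :=
      fun k => measurable_pi_lambda _ fun i => hmeas _
    have hvid : IdentDistrib (fun ω (i : Fin N) => C ((i : ℕ) + 0) ω)
        (fun ω (i : Fin N) => C ((i : ℕ) + 1) ω) P P := by
      refine ⟨(hvm 0).aemeasurable, (hvm 1).aemeasurable, ?_⟩
      rw [map_eq_pi C P hmeas hindep hident 0 N, map_eq_pi C P hmeas hindep hident 1 N]
    have hcomp := hvid.comp (G_measurable N)
    have h0 : F C 0 N = G N ∘ (fun ω (i : Fin N) => C ((i : ℕ) + 0) ω) :=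
      funext fun ω => F_eq C 0 N ω
    have h1 : F C 1 N = G N ∘ (fun ω (i : Fin N) => C ((i : ℕ) + 1) ω) :=
      funext fun ω => F_eq C 1 N ω
    rw [h0, h1]
    exact hcomp
  refine ⟨(W_meas C hmeas 0).aemeasurable, (W_meas C hmeas 1).aemeasurable, ?_⟩
  apply Measure.ext_of_Iic
  intro a
  rw [Measure.map_apply (W_meas C hmeas 0) measurableSet_Iic,
    Measure.map_apply (W_meas C hmeas 1) measurableSet_Iic]
  have hpre : ∀ k, W C k ⁻¹' Set.Iic a = ⋂ N, F C k N ⁻¹' Set.Iic a := by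
    intro k
    ext ω
    simp only [Set.mem_preimage, Set.mem_Iic, Set.mem_iInter]
    exact W_le_iff C k ω a
  have hmi : ∀ k, P (⋂ N, F C k N ⁻¹' Set.Iic a) = ⨅ N, P (F C k N ⁻¹' Set.Iic a) := by
    intro k
    apply Antitone.measure_iInter
    · intro N M h
      exact fun ω hω => Set.mem_Iic.2 (le_trans (F_mono C k ω h) hω)
    · exact fun N => ((F_meas C hmeas k N) measurableSet_Iic).nullMeasurableSet
    · exact ⟨0, measure_ne_top P _⟩
  rw [hpre 0, hpre 1, hmi 0, hmi 1]
  exact iInf_congr fun N => (hFid N).measure_mem_eq measurableSet_Iic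

theorem zero_one (P : Measure Ω) [IsProbabilityMeasure P]
    (hmeas : ∀ j, Measurable (C j)) (hpos : ∀ j ω, 0 < C j ω)
    (hindep : iIndepFun C P) :
    P {ω | W C 0 ω = ⊤} = 0 ∨ P {ω | W C 0 ω = ⊤} = 1 := by
  set s : ℕ → MeasurableSpace Ω := fun j => MeasurableSpace.comap (C j) inferInstance with hs
  have h_le : ∀ j, s j ≤ mΩ := fun j => (hmeas j).comap_le
  have h_indep : iIndep s P := (iIndepFun_iff_iIndep _ _ _).1 hindep
  apply measure_zero_or_one_of_measurableSet_limsup_atTop h_le h_indep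
  rw [limsup_eq_iInf_iSup_of_nat, MeasurableSpace.measurableSet_iInf]
  intro n
  have hset : {ω | W C 0 ω = ⊤} = W C n ⁻¹' {⊤} := by
    ext ω
    simp only [Set.mem_setOf_eq, Set.mem_preimage, Set.mem_singleton_iff]
    exact W_top_iff' C hpos n ω
  rw [hset]
  have hCmeas : ∀ j : ℕ, Measurable[⨆ i ≥ n, s i] (C (j + n)) := by
    intro j
    rw [measurable_iff_comap_le]
    exact le_trans (le_of_eq rfl) (le_iSup₂ (f := fun i (_ : i ≥ n) => s i) (j + n) (by omega))
  have hWn : Measurable[⨆ i ≥ n, s i] (W C n) := by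
    apply Measurable.ennreal_tsum
    intro m
    apply Measurable.ennreal_ofReal
    exact Finset.measurable_prod _ (fun j _ => hCmeas j)
  exact hWn (measurableSet_singleton ⊤)

theorem part1 (P : Measure Ω) [IsProbabilityMeasure P]
    (hpos : ∀ j ω, 0 < C j ω)
    (hindep : iIndepFun C P)
    (hident : ∀ j, IdentDistrib (C j) (C 0) P P)
    (hint : Integrable (fun ω => Real.log (C 0 ω)) P)
    (hneg : (∫ ω, Real.log (C 0 ω) ∂P) < 0) :
    ∀ᵐ ω ∂P, Summable (fun n => ∏ j ∈ Finset.range (n + 1), C j ω) := by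
  set X : ℕ → Ω → ℝ := fun j ω => Real.log (C j ω) with hX
  set μ0 : ℝ := ∫ ω, Real.log (C 0 ω) ∂P with hμ0
  have hXindep : iIndepFun X P :=
    hindep.comp (fun _ => Real.log) (fun _ => Real.measurable_log)
  have hXpair : Pairwise (Function.onFun (IndepFun · · P) X) := fun i j hij => hXindep.indepFun hij
  have hXident : ∀ i, IdentDistrib (X i) (X 0) P P :=
    fun i => (hident i).comp Real.measurable_log
  have hXint : Integrable (X 0) P := hint
  have hslln := strong_law_ae_real X hXint hXpair hXident
  have hμeq : P[X 0] = μ0 := rfl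
  filter_upwards [hslln] with ω htend
  rw [hμeq] at htend
  have hev : ∀ᶠ n : ℕ in atTop, (∑ i ∈ Finset.range n, X i ω) / n < μ0 / 2 :=
    htend.eventually_lt_const (by linarith)
  obtain ⟨N, hN⟩ := eventually_atTop.1 hev
  set r : ℝ := Real.exp (μ0 / 2) with hr
  have hr0 : 0 < r := Real.exp_pos _
  have hr1 : r < 1 := by
    rw [hr, ← Real.exp_zero]
    exact Real.exp_lt_exp.2 (by linarith)
  have hbound : ∀ m, N ≤ m → ∏ j ∈ Finset.range (m + 1), C j ω ≤ r ^ (m + 1) := by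
    intro m hm
    have hsum : (∑ i ∈ Finset.range (m + 1), X i ω) < μ0 / 2 * (m + 1) := by
      have h1 := hN (m + 1) (by omega)
      have hpos' : (0 : ℝ) < (m + 1 : ℕ) := by positivity
      rw [div_lt_iff₀ hpos'] at h1
      calc (∑ i ∈ Finset.range (m + 1), X i ω) < μ0 / 2 * ((m + 1 : ℕ) : ℝ) := h1
        _ = μ0 / 2 * (m + 1) := by push_cast; ring
    have hprodeq : ∏ j ∈ Finset.range (m + 1), C j ω
        = Real.exp (∑ i ∈ Finset.range (m + 1), X i ω) := by
      rw [Real.exp_sum]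
      exact Finset.prod_congr rfl fun j _ => (Real.exp_log (hpos j ω)).symm
    rw [hprodeq]
    calc Real.exp (∑ i ∈ Finset.range (m + 1), X i ω)
        ≤ Real.exp (μ0 / 2 * (m + 1)) := Real.exp_le_exp.2 hsum.le
      _ = r ^ (m + 1) := by
          rw [hr, ← Real.exp_nat_mul]
          congr 1
          push_cast
          ring
  rw [← summable_nat_add_iff N]
  apply Summable.of_nonneg_of_le
    (fun m => (Finset.prod_pos (fun j _ => hpos j ω)).le)
    (fun m => hbound (m + N) (by omega))
  have hsummable : Summable (fun m : ℕ => r ^ m * r ^ (N + 1)) :=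
    (summable_geometric_of_lt_one hr0.le hr1).mul_right _
  apply Summable.congr hsummable
  intro m
  rw [← pow_add, add_assoc]

theorem part2core (P : Measure Ω) [IsProbabilityMeasure P]
    (hmeas : ∀ j, Measurable (C j)) (hpos : ∀ j ω, 0 < C j ω)
    (hint : Integrable (fun ω => Real.log (C 0 ω)) P)
    (hμ : 0 ≤ ∫ ω, Real.log (C 0 ω) ∂P)
    (hW01 : IdentDistrib (W C 0) (W C 1) P P)
    (hfin : ∀ᵐ ω ∂P, W C 0 ω ≠ ⊤) : False := by
  set X : Ω → ℝ := fun ω => Real.log (C 0 ω) with hX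
  set μ0 : ℝ := ∫ ω, Real.log (C 0 ω) ∂P with hμ0
  set t : Ω → ℝ := fun ω => (W C 0 ω).toReal with ht
  set t' : Ω → ℝ := fun ω => (W C 1 ω).toReal with ht'
  have htmeas : Measurable t := (W_meas C hmeas 0).ennreal_toReal
  have ht'meas : Measurable t' := (W_meas C hmeas 1).ennreal_toReal
  have hXmeas : Measurable X := Real.measurable_log.comp (hmeas 0)
  have hgood : ∀ᵐ ω ∂P, 0 < t' ω ∧ t ω = C 0 ω * (1 + t' ω) ∧
      Real.log (t ω) = X ω + Real.log (1 + t' ω) := by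
    filter_upwards [hfin] with ω h0
    have h1 : W C 1 ω ≠ ⊤ := by
      intro hh
      apply h0
      rw [W_succ C hpos 0 ω, hh, ENNReal.mul_eq_top]
      left
      exact ⟨by simpa using hpos 0 ω, by simp⟩
    have ht'pos : 0 < t' ω := by
      have hle : ENNReal.ofReal (C 1 ω) ≤ W C 1 ω := by
        have := ENNReal.le_tsum (f := fun n =>
          ENNReal.ofReal (∏ j ∈ Finset.range (n + 1), C (j + 1) ω)) 0
        simpa [W] using this
      have := ENNReal.toReal_mono h1 hle
      rw [ENNReal.toReal_ofReal (hpos 1 ω).le] at this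
      exact lt_of_lt_of_le (hpos 1 ω) this
    have hteq : t ω = C 0 ω * (1 + t' ω) := by
      show (W C 0 ω).toReal = C 0 ω * (1 + (W C 1 ω).toReal)
      rw [W_succ C hpos 0 ω, ENNReal.toReal_mul, ENNReal.toReal_ofReal (hpos 0 ω).le,
        ENNReal.toReal_add ENNReal.one_ne_top h1, ENNReal.toReal_one]
    refine ⟨ht'pos, hteq, ?_⟩
    rw [hteq, Real.log_mul (hpos 0 ω).ne' (by linarith)]
  set φ : ℕ → ℝ → ℝ := fun K x => max (-(K : ℝ)) (min (K : ℝ) x) with hφ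
  have hφmeas : ∀ K, Measurable (φ K) :=
    fun K => measurable_const.max (measurable_const.min measurable_id)
  have hφbdd : ∀ K x, |φ K x| ≤ (K : ℝ) := by
    intro K x
    rw [abs_le]
    constructor
    · exact le_max_left _ _
    · exact max_le (neg_le_self (by positivity)) (min_le_left _ _)
  have hφev : ∀ x : ℝ, ∀ᶠ K : ℕ in atTop, φ K x = x := by
    intro x
    rw [eventually_atTop]
    refine ⟨⌈|x|⌉₊, fun K hK => ?_⟩
    have hKx : |x| ≤ (K : ℝ) := le_trans (Nat.le_ceil _) (by exact_mod_cast hK)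
    have h1 : x ≤ (K : ℝ) := le_trans (le_abs_self x) hKx
    have h2 : -(K : ℝ) ≤ x := by
      have := neg_abs_le x
      linarith
    show max (-(K : ℝ)) (min (K : ℝ) x) = x
    rw [min_eq_right h1, max_eq_right h2]
  have hφlow : ∀ (K : ℕ) (a b : ℝ), min (a - b) 0 ≤ φ K a - φ K b := by
    intro K a b
    show min (a - b) 0 ≤ max (-(K : ℝ)) (min (K : ℝ) a) - max (-(K : ℝ)) (min (K : ℝ) b)
    simp only [min_def, max_def]
    split_ifs <;> linarith
  set g : ℕ → Ω → ℝ := fun K ω => φ K (Real.log (t ω)) - φ K (Real.log (t' ω)) with hg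
  have hgmeas : ∀ K, Measurable (g K) := fun K =>
    ((hφmeas K).comp (Real.measurable_log.comp htmeas)).sub
      ((hφmeas K).comp (Real.measurable_log.comp ht'meas))
  have hphiint : ∀ (K : ℕ) (u : Ω → ℝ), Measurable u →
      Integrable (fun ω => φ K (Real.log (u ω))) P := by
    intro K u hu
    refine Integrable.mono' (integrable_const (K : ℝ))
      (((hφmeas K).comp (Real.measurable_log.comp hu)).aestronglyMeasurable) ?_
    exact ae_of_all _ fun ω => by simpa using hφbdd K _
  have hgint : ∀ K, Integrable (g K) P := fun K => (hphiint K t htmeas).sub (hphiint K t' ht'meas)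
  have hgzero : ∀ K, ∫ ω, g K ω ∂P = 0 := by
    intro K
    have hid : IdentDistrib (fun ω => φ K (Real.log (t ω))) (fun ω => φ K (Real.log (t' ω))) P P :=
      hW01.comp ((hφmeas K).comp (Real.measurable_log.comp ENNReal.measurable_toReal))
    show ∫ ω, (φ K (Real.log (t ω)) - φ K (Real.log (t' ω))) ∂P = 0
    rw [integral_sub (hphiint K t htmeas) (hphiint K t' ht'meas), hid.integral_eq, sub_self]
  have hminint : Integrable (fun ω => min (X ω) 0) P := by
    have heq : (fun ω => min (X ω) 0) = fun ω => (X ω - |X ω|) / 2 := by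
      funext ω
      rcases le_total (X ω) 0 with h | h
      · rw [min_eq_left h, abs_of_nonpos h]; ring
      · rw [min_eq_right h, abs_of_nonneg h]; ring
    rw [heq]
    exact (hint.sub hint.abs).div_const 2
  set c : ℝ := -∫ ω, min (X ω) 0 ∂P with hc
  have hc0 : 0 ≤ c := by
    rw [hc, neg_nonneg]
    exact integral_nonpos fun ω => min_le_right _ _
  set h : ℕ → Ω → ℝ := fun K ω => g K ω - min (X ω) 0 with hh
  have hhmeas : ∀ K, Measurable (h K) := fun K => (hgmeas K).sub (hXmeas.min measurable_const)
  have hhint : ∀ K, Integrable (h K) P := fun K => (hgint K).sub hminint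
  have hhintegral : ∀ K, ∫ ω, h K ω ∂P = c := by
    intro K
    show ∫ ω, (g K ω - min (X ω) 0) ∂P = c
    rw [integral_sub (hgint K) hminint, hgzero K, hc]
    ring
  have hhnn : ∀ K, 0 ≤ᵐ[P] h K := by
    intro K
    filter_upwards [hgood] with ω hpr
    obtain ⟨ht'pos, hteq, hlog⟩ := hpr
    have hab : X ω ≤ Real.log (t ω) - Real.log (t' ω) := by
      have hlg : Real.log (t' ω) ≤ Real.log (1 + t' ω) :=
        Real.log_le_log ht'pos (by linarith)
      rw [hlog]; linarith
    have hlow := hφlow K (Real.log (t ω)) (Real.log (t' ω))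
    have hmin : min (X ω) 0 ≤ min (Real.log (t ω) - Real.log (t' ω)) 0 :=
      min_le_min hab le_rfl
    show 0 ≤ φ K (Real.log (t ω)) - φ K (Real.log (t' ω)) - min (X ω) 0
    linarith
  have hlint : ∀ K, ∫⁻ ω, ENNReal.ofReal (h K ω) ∂P = ENNReal.ofReal c := by
    intro K
    rw [← ofReal_integral_eq_lintegral_ofReal (hhint K) (hhnn K), hhintegral K]
  set L : Ω → ℝ := fun ω => max (X ω) 0 + Real.log (1 + 1 / t' ω) with hL
  have hlim : ∀ᵐ ω ∂P, Filter.liminf (fun K => ENNReal.ofReal (h K ω)) atTop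
      = ENNReal.ofReal (L ω) := by
    filter_upwards [hgood] with ω hpr
    obtain ⟨ht'pos, hteq, hlog⟩ := hpr
    have hev : ∀ᶠ K : ℕ in atTop, ENNReal.ofReal (h K ω) = ENNReal.ofReal (L ω) := by
      filter_upwards [hφev (Real.log (t ω)), hφev (Real.log (t' ω))] with K h1 h2
      have hLeq : h K ω = L ω := by
        show φ K (Real.log (t ω)) - φ K (Real.log (t' ω)) - min (X ω) 0 = L ω
        rw [h1, h2]
        have hlog2 : Real.log (1 + t' ω) - Real.log (t' ω) = Real.log (1 + 1 / t' ω) := by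
          rw [← Real.log_div (by linarith) ht'pos.ne']
          congr 1
          field_simp
          ring
        have hmaxmin : X ω - min (X ω) 0 = max (X ω) 0 := by
          rcases le_total (X ω) 0 with hx | hx
          · rw [min_eq_left hx, max_eq_right hx]; ring
          · rw [min_eq_right hx, max_eq_left hx]; ring
        rw [hlog]
        show X ω + Real.log (1 + t' ω) - Real.log (t' ω) - min (X ω) 0
          = max (X ω) 0 + Real.log (1 + 1 / t' ω)
        linarith
      rw [hLeq]
    rw [Filter.liminf_congr hev]
    exact Filter.liminf_const _
  have hLHS : ∫⁻ ω, ENNReal.ofReal (L ω) ∂P ≤ ENNReal.ofReal c := by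
    calc ∫⁻ ω, ENNReal.ofReal (L ω) ∂P
        = ∫⁻ ω, Filter.liminf (fun K => ENNReal.ofReal (h K ω)) atTop ∂P :=
          lintegral_congr_ae (hlim.mono fun ω hω => hω.symm)
      _ ≤ Filter.liminf (fun K => ∫⁻ ω, ENNReal.ofReal (h K ω) ∂P) atTop :=
          lintegral_liminf_le (fun K => (hhmeas K).ennreal_ofReal)
      _ = ENNReal.ofReal c := by
          simp only [hlint]
          exact Filter.liminf_const _
  have ht''meas : Measurable (fun ω => Real.log (1 + 1 / t' ω)) :=
    Real.measurable_log.comp ((measurable_const.div ht'meas).const_add 1)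
  have hsplit : ∫⁻ ω, ENNReal.ofReal (L ω) ∂P
      = ∫⁻ ω, ENNReal.ofReal (max (X ω) 0) ∂P
        + ∫⁻ ω, ENNReal.ofReal (Real.log (1 + 1 / t' ω)) ∂P := by
    rw [← lintegral_add_left (hXmeas.max measurable_const).ennreal_ofReal]
    apply lintegral_congr_ae
    filter_upwards [hgood] with ω hpr
    obtain ⟨ht'pos, -, -⟩ := hpr
    have h1t : (0 : ℝ) ≤ 1 / t' ω := by positivity
    show ENNReal.ofReal (max (X ω) 0 + Real.log (1 + 1 / t' ω)) = _
    rw [ENNReal.ofReal_add (le_max_right _ _) (Real.log_nonneg (by linarith))]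
  have hmaxeq : (fun ω => max (X ω) 0) = fun ω => X ω - min (X ω) 0 := by
    funext ω
    rcases le_total (X ω) 0 with hx | hx
    · rw [min_eq_left hx, max_eq_right hx]; ring
    · rw [min_eq_right hx, max_eq_left hx]; ring
  have hmaxint : Integrable (fun ω => max (X ω) 0) P := by
    rw [hmaxeq]; exact hint.sub hminint
  have hmaxintegral : ∫ ω, max (X ω) 0 ∂P = μ0 + c := by
    rw [hmaxeq, integral_sub hint hminint, hc]
    rw [hμ0]
    ring
  have hmaxlint : ∫⁻ ω, ENNReal.ofReal (max (X ω) 0) ∂P = ENNReal.ofReal (μ0 + c) := by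
    rw [← ofReal_integral_eq_lintegral_ofReal hmaxint (ae_of_all _ fun ω => le_max_right _ _),
      hmaxintegral]
  have hle : ENNReal.ofReal (μ0 + c)
      + ∫⁻ ω, ENNReal.ofReal (Real.log (1 + 1 / t' ω)) ∂P ≤ ENNReal.ofReal (μ0 + c) + 0 := by
    rw [add_zero]
    calc ENNReal.ofReal (μ0 + c) + ∫⁻ ω, ENNReal.ofReal (Real.log (1 + 1 / t' ω)) ∂P
        = ∫⁻ ω, ENNReal.ofReal (L ω) ∂P := by rw [hsplit, hmaxlint]
      _ ≤ ENNReal.ofReal c := hLHS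
      _ ≤ ENNReal.ofReal (μ0 + c) := ENNReal.ofReal_le_ofReal (by linarith)
  have hzero : ∫⁻ ω, ENNReal.ofReal (Real.log (1 + 1 / t' ω)) ∂P = 0 :=
    le_antisymm (ENNReal.le_of_add_le_add_left ENNReal.ofReal_ne_top hle) zero_le
  have hae0 : ∀ᵐ ω ∂P, ENNReal.ofReal (Real.log (1 + 1 / t' ω)) = 0 := by
    have := (lintegral_eq_zero_iff ht''meas.ennreal_ofReal).1 hzero
    filter_upwards [this] with ω hω
    exact hω
  have hFalse : ∀ᵐ ω ∂P, False := by
    filter_upwards [hae0, hgood] with ω h0 hpr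
    obtain ⟨ht'pos, -, -⟩ := hpr
    rw [ENNReal.ofReal_eq_zero] at h0
    have h1t : (0 : ℝ) < 1 / t' ω := by positivity
    have : 0 < Real.log (1 + 1 / t' ω) := Real.log_pos (by linarith)
    linarith
  rcases hFalse.exists with ⟨ω, hω⟩
  exact hω

end Stmt4Aux

/-- Kaluza-type dichotomy for random geometric-like series: if `(C_j)` are i.i.d.
strictly positive random variables with integrable logarithm, then
`∑_{n≥1} ∏_{j=1}^n C_j` is a.s. finite when `E[log C₁] < 0` and a.s. infinite
when `E[log C₁] ≥ 0`. -/
theorem stmt4 {Ω : Type*} [MeasurableSpace Ω] (P : Measure Ω) [IsProbabilityMeasure P]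
    (C : ℕ → Ω → ℝ) (hmeas : ∀ j, Measurable (C j)) (hpos : ∀ j ω, 0 < C j ω)
    (hindep : iIndepFun C P)
    (hident : ∀ j, IdentDistrib (C j) (C 0) P P)
    (hint : Integrable (fun ω => Real.log (C 0 ω)) P) :
    ((∫ ω, Real.log (C 0 ω) ∂P) < 0 →
      ∀ᵐ ω ∂P, Summable (fun n => ∏ j ∈ Finset.range (n + 1), C j ω)) ∧
    (0 ≤ (∫ ω, Real.log (C 0 ω) ∂P) →
      ∀ᵐ ω ∂P, ∑' n : ℕ, ENNReal.ofReal (∏ j ∈ Finset.range (n + 1), C j ω) = ⊤) := by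
  constructor
  · exact Stmt4Aux.part1 C P hpos hindep hident hint
  · intro hμ
    have hW0eq : ∀ ω, (∑' n : ℕ, ENNReal.ofReal (∏ j ∈ Finset.range (n + 1), C j ω))
        = Stmt4Aux.W C 0 ω := by
      intro ω
      unfold Stmt4Aux.W
      simp
    rcases Stmt4Aux.zero_one C P hmeas hpos hindep with h0 | h1
    · exfalso
      have hfin : ∀ᵐ ω ∂P, Stmt4Aux.W C 0 ω ≠ ⊤ := by
        rw [ae_iff]
        simpa using h0
      exact Stmt4Aux.part2core C P hmeas hpos hint hμ
        (Stmt4Aux.identDistrib_W C P hmeas hindep hident) hfin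
    · have hms : MeasurableSet {ω | Stmt4Aux.W C 0 ω = ⊤} := by
        have : {ω | Stmt4Aux.W C 0 ω = ⊤} = Stmt4Aux.W C 0 ⁻¹' {⊤} := rfl
        rw [this]
        exact (Stmt4Aux.W_meas C hmeas 0) (measurableSet_singleton ⊤)
      have hcompl : P {ω | Stmt4Aux.W C 0 ω = ⊤}ᶜ = 0 := by
        rw [measure_compl hms (measure_ne_top P _), h1, measure_univ, tsub_self]
      have hae : ∀ᵐ ω ∂P, Stmt4Aux.W C 0 ω = ⊤ := by
        rw [ae_iff]
        exact hcompl
      filter_upwards [hae] with ω hω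
      rw [hW0eq ω]
      exact hω
end

section
/- Let β₁, β₂ ∈ (0,1) with β₁₂ := β₁ + β₂ − 1 ∈ (0,1). Then for every x > 0, P_D^{β₁,β₂}(x | 1) = ∫_0^x p_B^{β₁}(y | 1) · P_D^{β₂,β₁}(x − y | y) dy. -/
open MeasureTheory Real

/-- Overshoot density `p_B^β(y ∣ x) = (Γ(β)Γ(1−β))⁻¹ (x/y)^β (x+y)⁻¹`. -/
noncomputable def pB (β x y : ℝ) : ℝ :=
  (Gamma β * Gamma (1 - β))⁻¹ * (x / y) ^ β * (x + y)⁻¹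

/-- `P_D^{β₁,β₂}(x ∣ a) = (Γ(β₁₂)Γ(1−β₁₂))⁻¹ ∫_0^1 (a/x+y)^{β₁−1} y^{β₂−1} (1−y)^{−β₁₂} dy`,
where `β₁₂ = β₁ + β₂ − 1`. -/
noncomputable def PD (β₁ β₂ x a : ℝ) : ℝ :=
  (Gamma (β₁ + β₂ - 1) * Gamma (1 - (β₁ + β₂ - 1)))⁻¹ *
    ∫ y in (0 : ℝ)..1, (a / x + y) ^ (β₁ - 1) * y ^ (β₂ - 1) * (1 - y) ^ (-(β₁ + β₂ - 1))

open Set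

lemma complexBeta_eqOn {p q : ℝ} :
    EqOn (fun x : ℝ => ((x ^ (p - 1) * (1 - x) ^ (q - 1) : ℝ) : ℂ))
      (fun x : ℝ => (x : ℂ) ^ ((p : ℂ) - 1) * (1 - (x:ℂ)) ^ ((q:ℂ) - 1)) (Ioo (0:ℝ) 1) := by
  intro x hx
  have h1 : ((x ^ (p - 1) : ℝ) : ℂ) = (x:ℂ) ^ ((p:ℂ) - 1) := by
    rw [Complex.ofReal_cpow hx.1.le]; push_cast; ring_nf
  have h2 : (((1 - x) ^ (q - 1) : ℝ) : ℂ) = (1 - (x:ℂ)) ^ ((q:ℂ) - 1) := by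
    rw [Complex.ofReal_cpow (by linarith [hx.2] : (0:ℝ) ≤ 1 - x)]; push_cast; ring_nf
  simp only [Complex.ofReal_mul, h1, h2]

lemma betaIntegrableOn {p q : ℝ} (hp : 0 < p) (hq : 0 < q) :
    IntegrableOn (fun u : ℝ => u ^ (p - 1) * (1 - u) ^ (q - 1)) (Ioo (0:ℝ) 1) := by
  have hc : IntervalIntegrable (fun x : ℝ => (x : ℂ) ^ ((p : ℂ) - 1) * (1 - (x:ℂ)) ^ ((q:ℂ) - 1))
      volume 0 1 := Complex.betaIntegral_convergent (by simpa using hp) (by simpa using hq)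
  have hIoo : IntegrableOn (fun x : ℝ => (x : ℂ) ^ ((p : ℂ) - 1) * (1 - (x:ℂ)) ^ ((q:ℂ) - 1))
      (Ioo (0:ℝ) 1) := ((intervalIntegrable_iff_integrableOn_Ioo_of_le zero_le_one).mp hc)
  have h2 : IntegrableOn (fun x : ℝ => ((x ^ (p - 1) * (1 - x) ^ (q - 1) : ℝ) : ℂ)) (Ioo (0:ℝ) 1) :=
    hIoo.congr_fun complexBeta_eqOn.symm measurableSet_Ioo
  simpa [IntegrableOn] using h2.re

lemma realBeta {p q : ℝ} (hp : 0 < p) (hq : 0 < q) :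
    ∫ u in Ioo (0:ℝ) 1, u ^ (p - 1) * (1 - u) ^ (q - 1) = Gamma p * Gamma q / Gamma (p + q) := by
  have key : Complex.Gamma p * Complex.Gamma q
      = Complex.Gamma (p + q) * Complex.betaIntegral p q :=
    Complex.Gamma_mul_Gamma_eq_betaIntegral (by simpa using hp) (by simpa using hq)
  have hbeta : Complex.betaIntegral p q
      = ((∫ u in Ioo (0:ℝ) 1, u ^ (p - 1) * (1 - u) ^ (q - 1) : ℝ) : ℂ) := by
    rw [Complex.betaIntegral]
    rw [intervalIntegral.integral_of_le zero_le_one, integral_Ioc_eq_integral_Ioo]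
    rw [← setIntegral_congr_fun measurableSet_Ioo complexBeta_eqOn]
    exact integral_ofReal (𝕜 := ℂ) (f := fun u => u ^ (p-1) * (1-u)^(q-1))
  have hG : ((Gamma p * Gamma q : ℝ) : ℂ)
      = ((Gamma (p + q) * ∫ u in Ioo (0:ℝ) 1, u ^ (p - 1) * (1 - u) ^ (q - 1) : ℝ) : ℂ) := by
    push_cast
    rw [← Complex.Gamma_ofReal, ← Complex.Gamma_ofReal, ← Complex.Gamma_ofReal]
    rw [key, hbeta]; push_cast; ring
  have := Complex.ofReal_injective hG
  have hΓ : Gamma (p + q) ≠ 0 := (Real.Gamma_pos_of_pos (by linarith)).ne'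
  field_simp
  linarith [this]

section euler
variable {β t : ℝ}

private lemma mob_img (ht : 0 < t) :
    (fun w => t * w / (1 + t - t * w)) '' Ioo (0:ℝ) 1 = Ioo 0 t := by
  ext y
  constructor
  · rintro ⟨w, ⟨hw0, hw1⟩, rfl⟩
    have hD : 0 < 1 + t - t * w := by nlinarith
    constructor
    · positivity
    · rw [div_lt_iff₀ hD]; nlinarith [mul_pos ht (by linarith : (0:ℝ) < 1 - w)]
  · rintro ⟨hy0, hyt⟩
    refine ⟨y * (1 + t) / (t * (1 + y)), ⟨by positivity, ?_⟩, ?_⟩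
    · rw [div_lt_one (by positivity)]; nlinarith
    · have h1 : (0:ℝ) < 1 + y := by linarith
      have h2 : t + t ^ 2 ≠ 0 := by positivity
      field_simp
      ring
private lemma mob_inj (ht : 0 < t) :
    Set.InjOn (fun w => t * w / (1 + t - t * w)) (Ioo (0:ℝ) 1) := by
  intro w1 h1 w2 h2 heq
  have hD1 : 0 < 1 + t - t * w1 := by nlinarith [h1.1, h1.2]
  have hD2 : 0 < 1 + t - t * w2 := by nlinarith [h2.1, h2.2]
  simp only at heq
  rw [div_eq_div_iff (ne_of_gt hD1) (ne_of_gt hD2)] at heq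
  have h3 : t * (1 + t) * w1 = t * (1 + t) * w2 := by nlinarith [heq]
  exact mul_left_cancel₀ (by positivity) h3
private lemma mob_deriv (ht : 0 < t) :
    ∀ w ∈ Ioo (0:ℝ) 1, HasDerivWithinAt (fun w => t * w / (1 + t - t * w))
      (t * (1 + t) / (1 + t - t * w) ^ 2) (Ioo (0:ℝ) 1) w := by
  intro w hw
  have hD : 0 < 1 + t - t * w := by nlinarith [hw.1, hw.2]
  have h1 : HasDerivWithinAt (fun w : ℝ => t * w) t (Ioo (0:ℝ) 1) w :=
    ((hasDerivAt_id w).const_mul t).hasDerivWithinAt.congr_deriv (by ring)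
  have h2 : HasDerivWithinAt (fun w : ℝ => 1 + t - t * w) (-t) (Ioo (0:ℝ) 1) w := by
    simpa using (((hasDerivAt_id w).const_mul t).const_sub (1 + t)).hasDerivWithinAt
  have := h1.div h2 (ne_of_gt hD)
  exact this.congr_deriv (by rw [div_left_inj' (pow_ne_zero 2 hD.ne')]; ring)
end euler

private lemma exp_rpow' (x y : ℝ) : (Real.exp x) ^ y = Real.exp (x * y) := by
  rw [Real.rpow_def_of_pos (Real.exp_pos x), Real.log_exp]

private lemma rpow_alg {β T U V W D : ℝ} (hT : 0<T) (hU : 0<U) (hV : 0<V) (hW : 0<W) (hD : 0<D) :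
    (T*U/D^2) * ((T*W/D)^(-β) * (U/D)⁻¹ * (T*U*V/D)^(β-1)) = U^(β-1) * (W^(-β) * V^(β-1)) := by
  obtain ⟨a, rfl⟩ : ∃ a, Real.exp a = T := ⟨Real.log T, Real.exp_log hT⟩
  obtain ⟨b, rfl⟩ : ∃ b, Real.exp b = U := ⟨Real.log U, Real.exp_log hU⟩
  obtain ⟨c, rfl⟩ : ∃ c, Real.exp c = V := ⟨Real.log V, Real.exp_log hV⟩
  obtain ⟨d, rfl⟩ : ∃ d, Real.exp d = W := ⟨Real.log W, Real.exp_log hW⟩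
  obtain ⟨e, rfl⟩ : ∃ e, Real.exp e = D := ⟨Real.log D, Real.exp_log hD⟩
  rw [← Real.exp_nat_mul]
  simp only [← Real.exp_add, ← Real.exp_sub, exp_rpow', ← Real.exp_neg, div_eq_mul_inv]
  rw [Real.exp_eq_exp]
  push_cast
  ring

private lemma mob_pointwise {β t : ℝ} (hβ0 : 0 < β) (hβ1 : β < 1) (ht : 0 < t) :
    EqOn (fun w => |t*(1+t)/(1+t-t*w)^2| •
        ((fun y : ℝ => y^(-β) * (1+y)⁻¹ * (t-y)^(β-1)) (t*w/(1+t-t*w))))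
      (fun w => (1+t)^(β-1) * (w^((1-β)-1) * (1-w)^(β-1))) (Ioo (0:ℝ) 1) := by
  intro w hw
  have hD : 0 < 1+t-t*w := by nlinarith [hw.1, hw.2]
  have e1 : 1 + t*w/(1+t-t*w) = (1+t)/(1+t-t*w) := by field_simp; ring
  have e2 : t - t*w/(1+t-t*w) = t*(1+t)*(1-w)/(1+t-t*w) := by field_simp; ring
  simp only [smul_eq_mul]
  rw [e1, e2, abs_of_pos (by positivity), show (1:ℝ)-β-1 = -β by ring]
  exact rpow_alg ht (by linarith) (by linarith [hw.2]) hw.1 hD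

lemma euler_integral {β t : ℝ} (hβ0 : 0 < β) (hβ1 : β < 1) (ht : 0 < t) :
    ∫ y in Ioo (0:ℝ) t, y^(-β) * (1+y)⁻¹ * (t-y)^(β-1)
      = Gamma (1-β) * Gamma β * (1+t)^(β-1) := by
  rw [← mob_img ht,
    integral_image_eq_integral_abs_deriv_smul measurableSet_Ioo (mob_deriv ht) (mob_inj ht)]
  rw [setIntegral_congr_fun measurableSet_Ioo (mob_pointwise hβ0 hβ1 ht)]
  rw [MeasureTheory.integral_const_mul, realBeta (by linarith : (0:ℝ) < 1-β) hβ0]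
  rw [show (1:ℝ)-β+β = 1 by ring, Real.Gamma_one]
  ring

lemma euler_integrableOn {β t : ℝ} (hβ0 : 0 < β) (hβ1 : β < 1) (ht : 0 < t) :
    IntegrableOn (fun y : ℝ => y^(-β) * (1+y)⁻¹ * (t-y)^(β-1)) (Ioo (0:ℝ) t) := by
  rw [← mob_img ht,
    integrableOn_image_iff_integrableOn_abs_deriv_smul measurableSet_Ioo (mob_deriv ht) (mob_inj ht)]
  have hb : IntegrableOn (fun w : ℝ => (1+t)^(β-1) * (w^((1-β)-1) * (1-w)^(β-1))) (Ioo (0:ℝ) 1) :=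
    (betaIntegrableOn (by linarith : (0:ℝ) < 1-β) hβ0).const_mul ((1+t)^(β-1))
  exact hb.congr_fun (mob_pointwise hβ0 hβ1 ht).symm measurableSet_Ioo

private lemma exp_rpow'' (x y : ℝ) : (Real.exp x) ^ y = Real.exp (x * y) := by
  rw [Real.rpow_def_of_pos (Real.exp_pos x), Real.log_exp]

private lemma rpow_scale {a b c S T U V : ℝ} (h : a + b + c = -1)
    (hS : 0 < S) (hT : 0 < T) (hU : 0 < U) (hV : 0 < V) :
    S * (T ^ a * (S * U) ^ b * (S * V) ^ c) = (T / S) ^ a * U ^ b * V ^ c := by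
  obtain ⟨s, rfl⟩ : ∃ s, Real.exp s = S := ⟨Real.log S, Real.exp_log hS⟩
  obtain ⟨t, rfl⟩ : ∃ t, Real.exp t = T := ⟨Real.log T, Real.exp_log hT⟩
  obtain ⟨u, rfl⟩ : ∃ u, Real.exp u = U := ⟨Real.log U, Real.exp_log hU⟩
  obtain ⟨v, rfl⟩ : ∃ v, Real.exp v = V := ⟨Real.log V, Real.exp_log hV⟩
  simp only [← Real.exp_add, ← Real.exp_sub, exp_rpow'']
  rw [Real.exp_eq_exp]
  linear_combination s * h

private lemma aff_img {y x : ℝ} (hyx : y < x) :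
    (fun u => y + (x - y) * u) '' Ioo (0:ℝ) 1 = Ioo y x := by
  have hxy : (0:ℝ) < x - y := by linarith
  ext z
  constructor
  · rintro ⟨u, ⟨hu0, hu1⟩, rfl⟩
    simp only [Set.mem_Ioo]
    constructor <;> nlinarith [mul_pos hxy hu0, mul_lt_mul_of_pos_left hu1 hxy]
  · rintro ⟨hz0, hz1⟩
    have hne : x - y ≠ 0 := ne_of_gt hxy
    exact ⟨(z - y) / (x - y), ⟨div_pos (by linarith) hxy, by rw [div_lt_one hxy]; linarith⟩,
      by field_simp; ring⟩

private lemma aff_deriv (y x : ℝ) :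
    ∀ u ∈ Ioo (0:ℝ) 1, HasDerivWithinAt (fun u => y + (x - y) * u) (x - y) (Ioo (0:ℝ) 1) u :=
  fun u _ => by simpa using (((hasDerivAt_id u).const_mul (x - y)).const_add y).hasDerivWithinAt

private lemma aff_inj {y x : ℝ} (hyx : y < x) :
    Set.InjOn (fun u => y + (x - y) * u) (Ioo (0:ℝ) 1) := by
  intro u1 _ u2 _ h
  simp only at h
  have hne : x - y ≠ 0 := by linarith
  nlinarith [h]

private lemma aff_pointwise {β₁ β₂ y x : ℝ} (h₁ : β₁ ∈ Set.Ioo (0:ℝ) 1)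
    (h₂ : β₂ ∈ Set.Ioo (0:ℝ) 1) (hy : 0 < y) (hyx : y < x) :
    Set.EqOn
      (fun u => |x - y| • ((fun t : ℝ => t ^ (β₂-1) * (t - y) ^ (β₁-1) * (x - t) ^ (-(β₂+β₁-1)))
        (y + (x - y) * u)))
      (fun u => (y/(x-y) + u) ^ (β₂-1) * u ^ (β₁-1) * (1-u) ^ (-(β₂+β₁-1)))
      (Ioo (0:ℝ) 1) := by
  intro u hu
  have hxy : 0 < x - y := by linarith
  have hne : x - y ≠ 0 := ne_of_gt hxy
  have e3 : 0 < y/(x-y) + u := by have := div_pos hy hxy; linarith [hu.1]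
  have e0 : y + (x - y) * u = (x - y) * (y/(x-y) + u) := by field_simp
  have e1 : y + (x - y) * u - y = (x - y) * u := by ring
  have e2 : x - (y + (x - y) * u) = (x - y) * (1 - u) := by ring
  simp only [smul_eq_mul]
  rw [e1, e2, e0, abs_of_pos hxy]
  have key := rpow_scale (a := β₂-1) (b := β₁-1) (c := -(β₂+β₁-1)) (by ring)
    (S := x - y) hxy (T := (x-y) * (y/(x-y)+u)) (by positivity) (U := u) hu.1
    (V := 1 - u) (by nlinarith [hu.2])
  rw [key, mul_div_cancel_left₀ _ hne]

lemma pd_integrableOn (c p q r : ℝ) (hc : 0 < c) (hp : 0 < p) (hq : 0 < q) :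
    IntegrableOn (fun u : ℝ => (c + u) ^ r * (u ^ (p-1) * (1-u) ^ (q-1))) (Ioo (0:ℝ) 1) := by
  apply Integrable.bdd_mul (c := max (c ^ r) ((c+1) ^ r)) (betaIntegrableOn hp hq)
  · exact (by fun_prop : Measurable fun u : ℝ => (c + u) ^ r).aestronglyMeasurable
  · filter_upwards [ae_restrict_mem measurableSet_Ioo] with u hu
    have h1 : (0:ℝ) < c + u := by linarith [hu.1]
    rw [Real.norm_eq_abs, abs_of_nonneg (Real.rpow_nonneg h1.le r)]
    rcases le_or_gt 0 r with hr | hr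
    · exact le_trans (Real.rpow_le_rpow h1.le (by linarith [hu.2]) hr) (le_max_right _ _)
    · exact le_trans (Real.rpow_le_rpow_of_nonpos hc (by linarith [hu.1]) hr.le) (le_max_left _ _)

section main
variable {β₁ β₂ x y : ℝ}

lemma aff_integral (h₁ : β₁ ∈ Set.Ioo (0:ℝ) 1) (h₂ : β₂ ∈ Set.Ioo (0:ℝ) 1)
    (hy : 0 < y) (hyx : y < x) :
    ∫ t in Ioo y x, t ^ (β₂-1) * (t - y) ^ (β₁-1) * (x - t) ^ (-(β₂+β₁-1))
      = ∫ u in Ioo (0:ℝ) 1, (y/(x-y) + u) ^ (β₂-1) * u ^ (β₁-1) * (1-u) ^ (-(β₂+β₁-1)) := by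
  rw [← aff_img hyx, integral_image_eq_integral_abs_deriv_smul measurableSet_Ioo
    (aff_deriv y x) (aff_inj hyx)]
  exact setIntegral_congr_fun measurableSet_Ioo (aff_pointwise h₁ h₂ hy hyx)

lemma aff_integrableOn (h₁ : β₁ ∈ Set.Ioo (0:ℝ) 1) (h₂ : β₂ ∈ Set.Ioo (0:ℝ) 1)
    (h₁₂ : β₁ + β₂ - 1 ∈ Set.Ioo (0:ℝ) 1) (hy : 0 < y) (hyx : y < x) :
    IntegrableOn (fun t : ℝ => t ^ (β₂-1) * (t - y) ^ (β₁-1) * (x - t) ^ (-(β₂+β₁-1)))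
      (Ioo y x) := by
  rw [← aff_img hyx, integrableOn_image_iff_integrableOn_abs_deriv_smul measurableSet_Ioo
    (aff_deriv y x) (aff_inj hyx)]
  have h0 := pd_integrableOn (y/(x-y)) β₁ (2-β₂-β₁) (β₂-1)
    (div_pos hy (by linarith)) h₁.1 (by linarith [h₁₂.2])
  have h0' : IntegrableOn
      (fun u : ℝ => (y/(x-y) + u) ^ (β₂-1) * u ^ (β₁-1) * (1-u) ^ (-(β₂+β₁-1)))
      (Ioo (0:ℝ) 1) := by
    refine h0.congr_fun (fun u hu => ?_) measurableSet_Ioo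
    rw [show (2-β₂-β₁)-1 = -(β₂+β₁-1) by ring, mul_assoc]
  exact h0'.congr_fun (aff_pointwise h₁ h₂ hy hyx).symm measurableSet_Ioo

private lemma scale_img (hx : 0 < x) : (fun u => x * u) '' Ioo (0:ℝ) 1 = Ioo 0 x := by
  ext z
  constructor
  · rintro ⟨u, ⟨hu0, hu1⟩, rfl⟩
    simp only [Set.mem_Ioo]
    constructor
    · positivity
    · nlinarith
  · rintro ⟨hz0, hz1⟩
    exact ⟨z / x, ⟨by positivity, by rw [div_lt_one hx]; linarith⟩, by field_simp⟩

private lemma scale_deriv (x : ℝ) :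
    ∀ u ∈ Ioo (0:ℝ) 1, HasDerivWithinAt (fun u => x * u) x (Ioo (0:ℝ) 1) u :=
  fun u _ => by simpa using ((hasDerivAt_id u).const_mul x).hasDerivWithinAt

private lemma scale_inj (hx : 0 < x) : Set.InjOn (fun u => x * u) (Ioo (0:ℝ) 1) :=
  fun u1 _ u2 _ h => mul_left_cancel₀ (ne_of_gt hx) h

private lemma scale_pointwise (h₁ : β₁ ∈ Set.Ioo (0:ℝ) 1) (h₂ : β₂ ∈ Set.Ioo (0:ℝ) 1)
    (hx : 0 < x) :
    Set.EqOn
      (fun u => |x| • ((fun t : ℝ => t ^ (β₂-1) * (1 + t) ^ (β₁-1) * (x - t) ^ (-(β₁+β₂-1)))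
        (x * u)))
      (fun u => (1/x + u) ^ (β₁-1) * u ^ (β₂-1) * (1-u) ^ (-(β₁+β₂-1)))
      (Ioo (0:ℝ) 1) := by
  intro u hu
  have h1 : (0:ℝ) < 1 + x * u := by nlinarith [hu.1]
  simp only [smul_eq_mul]
  rw [abs_of_pos hx, show x - x * u = x * (1 - u) by ring,
    show (x*u) ^ (β₂-1) * (1+x*u) ^ (β₁-1) * (x*(1-u)) ^ (-(β₁+β₂-1))
      = (1+x*u) ^ (β₁-1) * (x*u) ^ (β₂-1) * (x*(1-u)) ^ (-(β₁+β₂-1)) by ring]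
  rw [rpow_scale (a := β₁-1) (b := β₂-1) (c := -(β₁+β₂-1)) (by ring) hx h1 hu.1
    (by linarith [hu.2] : (0:ℝ) < 1 - u)]
  rw [show (1+x*u)/x = 1/x + u by field_simp]

lemma scale_integral (h₁ : β₁ ∈ Set.Ioo (0:ℝ) 1) (h₂ : β₂ ∈ Set.Ioo (0:ℝ) 1) (hx : 0 < x) :
    ∫ t in Ioo 0 x, t ^ (β₂-1) * (1 + t) ^ (β₁-1) * (x - t) ^ (-(β₁+β₂-1))
      = ∫ u in Ioo (0:ℝ) 1, (1/x + u) ^ (β₁-1) * u ^ (β₂-1) * (1-u) ^ (-(β₁+β₂-1)) := by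
  rw [← scale_img hx, integral_image_eq_integral_abs_deriv_smul measurableSet_Ioo
    (scale_deriv x) (scale_inj hx)]
  exact setIntegral_congr_fun measurableSet_Ioo (scale_pointwise h₁ h₂ hx)

lemma scale_integrableOn (h₁ : β₁ ∈ Set.Ioo (0:ℝ) 1) (h₂ : β₂ ∈ Set.Ioo (0:ℝ) 1)
    (h₁₂ : β₁ + β₂ - 1 ∈ Set.Ioo (0:ℝ) 1) (hx : 0 < x) :
    IntegrableOn (fun t : ℝ => t ^ (β₂-1) * (1 + t) ^ (β₁-1) * (x - t) ^ (-(β₁+β₂-1)))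
      (Ioo (0:ℝ) x) := by
  rw [← scale_img hx, integrableOn_image_iff_integrableOn_abs_deriv_smul measurableSet_Ioo
    (scale_deriv x) (scale_inj hx)]
  have h0 := pd_integrableOn (1/x) β₂ (2-β₁-β₂) (β₁-1) (by positivity) h₂.1 (by linarith [h₁₂.2])
  have h0' : IntegrableOn
      (fun u : ℝ => (1/x + u) ^ (β₁-1) * u ^ (β₂-1) * (1-u) ^ (-(β₁+β₂-1)))
      (Ioo (0:ℝ) 1) := by
    refine h0.congr_fun (fun u hu => ?_) measurableSet_Ioo
    rw [show (2-β₁-β₂)-1 = -(β₁+β₂-1) by ring, mul_assoc]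
  exact h0'.congr_fun (scale_pointwise h₁ h₂ hx).symm measurableSet_Ioo

end main

section swap
variable {β₁ β₂ x : ℝ}

lemma swap_lemma (h₁ : β₁ ∈ Set.Ioo (0:ℝ) 1) (h₂ : β₂ ∈ Set.Ioo (0:ℝ) 1)
    (h₁₂ : β₁ + β₂ - 1 ∈ Set.Ioo (0:ℝ) 1) (hx : 0 < x) :
    ∫ y in Ioo (0:ℝ) x, (∫ t in Ioo y x,
        (t ^ (β₂-1) * (x-t) ^ (-(β₁+β₂-1))) * (y ^ (-β₁) * (1+y)⁻¹ * (t-y) ^ (β₁-1)))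
      = Gamma (1-β₁) * Gamma β₁ *
        ∫ t in Ioo (0:ℝ) x, t ^ (β₂-1) * (1 + t) ^ (β₁-1) * (x - t) ^ (-(β₁+β₂-1)) := by
  set G : ℝ → ℝ → ℝ := fun y t =>
    (t ^ (β₂-1) * (x-t) ^ (-(β₁+β₂-1))) * (y ^ (-β₁) * (1+y)⁻¹ * (t-y) ^ (β₁-1)) with hG
  set μ : Measure ℝ := volume.restrict (Ioo (0:ℝ) x) with hμ
  set f : ℝ → ℝ → ℝ := fun y t => (Ioi y).indicator (G y) t with hf
  have hGnn : ∀ {y t : ℝ}, 0 < y → y < t → t < x → 0 ≤ G y t := by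
    intro y t hy hyt htx
    have h0t : (0:ℝ) < t := lt_trans hy hyt
    apply mul_nonneg (mul_nonneg (Real.rpow_nonneg h0t.le _)
      (Real.rpow_nonneg (by linarith) _))
    apply mul_nonneg (mul_nonneg (Real.rpow_nonneg (by linarith) _) (by positivity))
      (Real.rpow_nonneg (by linarith) _)
  have hGmeas : Measurable (Function.uncurry G) := by fun_prop
  have hfmeas : Measurable (Function.uncurry f) := by
    have : Function.uncurry f = Set.indicator {p : ℝ × ℝ | p.1 < p.2} (Function.uncurry G) := by
      funext p
      by_cases h : p.1 < p.2 <;>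
        simp [Function.uncurry, hf, Set.indicator_apply, Set.mem_Ioi, h]
    rw [this]
    exact hGmeas.indicator (measurableSet_lt measurable_fst measurable_snd)
  -- y-sections
  have hsec : ∀ t : ℝ, (fun y => f y t) = (Iio t).indicator (fun y => G y t) := by
    intro t; funext y
    by_cases h : y < t <;> simp [hf, Set.indicator_apply, Set.mem_Ioi, Set.mem_Iio, h]
  have hIio : ∀ {t : ℝ}, t ≤ x → Iio t ∩ Ioo 0 x = Ioo 0 t := by
    intro t htx
    ext z; simp only [mem_inter_iff, mem_Iio, mem_Ioo]
    exact ⟨fun ⟨a, b, c⟩ => ⟨b, a⟩, fun ⟨a, b⟩ => ⟨b, a, by linarith⟩⟩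
  have hIoi : ∀ {y : ℝ}, 0 < y → Ioi y ∩ Ioo 0 x = Ioo y x := by
    intro y hy
    ext z; simp only [mem_inter_iff, mem_Ioi, mem_Ioo]
    exact ⟨fun ⟨a, b, c⟩ => ⟨a, c⟩, fun ⟨a, b⟩ => ⟨a, by linarith, b⟩⟩
  -- integrability of y-sections on Ioo 0 t
  have hsecInt : ∀ {t : ℝ}, 0 < t → t < x → IntegrableOn (fun y => G y t) (Ioo (0:ℝ) t) := by
    intro t h0t htx
    exact (euler_integrableOn h₁.1 h₁.2 h0t).const_mul _
  -- value of inner y-integral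
  have hsecVal : ∀ {t : ℝ}, 0 < t → t < x →
      ∫ y in Ioo (0:ℝ) t, G y t
        = Gamma (1-β₁) * Gamma β₁ * (t ^ (β₂-1) * (1+t) ^ (β₁-1) * (x-t) ^ (-(β₁+β₂-1))) := by
    intro t h0t htx
    rw [hG]
    rw [MeasureTheory.integral_const_mul, euler_integral h₁.1 h₁.2 h0t]
    ring
  -- integrability on the product
  have hInt : Integrable (Function.uncurry f) (μ.prod μ) := by
    rw [MeasureTheory.integrable_prod_iff' hfmeas.aestronglyMeasurable]
    constructor
    · filter_upwards [ae_restrict_mem measurableSet_Ioo] with t ht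
      simp only [Function.uncurry_apply_pair]
      rw [hsec t, hμ, integrable_indicator_iff measurableSet_Iio]
      rw [IntegrableOn, Measure.restrict_restrict measurableSet_Iio, hIio ht.2.le]
      exact hsecInt ht.1 ht.2
    · have heq : ∀ᵐ t ∂μ, (∫ y, ‖f y t‖ ∂μ)
          = Gamma (1-β₁) * Gamma β₁ * (t ^ (β₂-1) * (1+t) ^ (β₁-1) * (x-t) ^ (-(β₁+β₂-1))) := by
        filter_upwards [ae_restrict_mem measurableSet_Ioo] with t ht
        have h1 : ∀ᵐ y ∂μ, ‖f y t‖ = (Iio t).indicator (fun y => G y t) y := by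
          filter_upwards [ae_restrict_mem measurableSet_Ioo] with y hy
          by_cases h : y < t
          · simp only [hf, Set.indicator_apply, Set.mem_Ioi, Set.mem_Iio, h, if_true,
              Real.norm_eq_abs]
            exact abs_of_nonneg (hGnn hy.1 h ht.2)
          · simp only [hf, Set.indicator_apply, Set.mem_Ioi, Set.mem_Iio, h, if_false, norm_zero]
        rw [integral_congr_ae h1, hμ, integral_indicator measurableSet_Iio,
          Measure.restrict_restrict measurableSet_Iio, hIio ht.2.le]
        exact hsecVal ht.1 ht.2
      simp only [Function.uncurry_apply_pair]
      refine Integrable.congr ?_ (Filter.EventuallyEq.symm heq)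
      rw [hμ]
      exact ((scale_integrableOn h₁ h₂ h₁₂ hx).const_mul _)
  -- swap
  have hswap := MeasureTheory.integral_integral_swap (f := f) hInt
  calc ∫ y in Ioo (0:ℝ) x, (∫ t in Ioo y x, G y t)
      = ∫ y, (∫ t, f y t ∂μ) ∂μ := by
        rw [hμ]
        refine setIntegral_congr_fun measurableSet_Ioo (fun y hy => ?_)
        rw [hf]
        simp only []
        rw [integral_indicator measurableSet_Ioi,
          Measure.restrict_restrict measurableSet_Ioi, hIoi hy.1]
    _ = ∫ t, (∫ y, f y t ∂μ) ∂μ := hswap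
    _ = ∫ t in Ioo (0:ℝ) x, (Gamma (1-β₁) * Gamma β₁ *
          (t ^ (β₂-1) * (1+t) ^ (β₁-1) * (x-t) ^ (-(β₁+β₂-1)))) := by
        rw [hμ]
        refine setIntegral_congr_fun measurableSet_Ioo (fun t ht => ?_)
        rw [hsec t, integral_indicator measurableSet_Iio,
          Measure.restrict_restrict measurableSet_Iio, hIio ht.2.le]
        exact hsecVal ht.1 ht.2
    _ = Gamma (1-β₁) * Gamma β₁ *
          ∫ t in Ioo (0:ℝ) x, t ^ (β₂-1) * (1 + t) ^ (β₁-1) * (x - t) ^ (-(β₁+β₂-1)) := by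
        rw [MeasureTheory.integral_const_mul]
end swap


/-- Proposition `prop:first_intersection`:
`P_D^{β₁,β₂}(x ∣ 1) = ∫_0^x p_B^{β₁}(y ∣ 1) P_D^{β₂,β₁}(x−y ∣ y) dy`. -/
theorem stmt5 (β₁ β₂ : ℝ) (h₁ : β₁ ∈ Set.Ioo (0 : ℝ) 1) (h₂ : β₂ ∈ Set.Ioo (0 : ℝ) 1)
    (h₁₂ : β₁ + β₂ - 1 ∈ Set.Ioo (0 : ℝ) 1) (x : ℝ) (hx : 0 < x) :
    PD β₁ β₂ x 1 = ∫ y in (0 : ℝ)..x, pB β₁ 1 y * PD β₂ β₁ (x - y) y := by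
  have hK : (Gamma β₁ * Gamma (1-β₁))⁻¹ * (Gamma (1-β₁) * Gamma β₁) = 1 := by
    rw [mul_comm (Gamma (1-β₁))]
    exact inv_mul_cancel₀
      (mul_pos (Real.Gamma_pos_of_pos h₁.1) (Real.Gamma_pos_of_pos (by linarith [h₁.2]))).ne'
  -- right-hand side
  rw [intervalIntegral.integral_of_le hx.le, integral_Ioc_eq_integral_Ioo]
  have hRpt : Set.EqOn (fun y => pB β₁ 1 y * PD β₂ β₁ (x-y) y)
      (fun y => ((Gamma β₁ * Gamma (1-β₁))⁻¹ * (Gamma (β₁+β₂-1) * Gamma (1-(β₁+β₂-1)))⁻¹) *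
        ∫ t in Ioo y x,
          (t ^ (β₂-1) * (x-t) ^ (-(β₁+β₂-1))) * (y ^ (-β₁) * (1+y)⁻¹ * (t-y) ^ (β₁-1)))
      (Ioo (0:ℝ) x) := by
    intro y hy
    simp only [pB, PD]
    rw [intervalIntegral.integral_of_le zero_le_one, integral_Ioc_eq_integral_Ioo,
      ← aff_integral h₁ h₂ hy.1 hy.2]
    simp only [show (-(β₂+β₁-1):ℝ) = -(β₁+β₂-1) from by ring,
      show β₂+β₁-1 = β₁+β₂-1 from by ring]
    rw [one_div, Real.inv_rpow hy.1.le, ← Real.rpow_neg hy.1.le]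
    have hinner : ∫ t in Ioo y x,
          (t ^ (β₂-1) * (x-t) ^ (-(β₁+β₂-1))) * (y ^ (-β₁) * (1+y)⁻¹ * (t-y) ^ (β₁-1))
        = (y ^ (-β₁) * (1+y)⁻¹) *
          ∫ t in Ioo y x, t ^ (β₂-1) * (t-y) ^ (β₁-1) * (x-t) ^ (-(β₁+β₂-1)) := by
      rw [← MeasureTheory.integral_const_mul]
      exact setIntegral_congr_fun measurableSet_Ioo (fun t ht => by ring)
    rw [hinner]
    ring
  rw [setIntegral_congr_fun measurableSet_Ioo hRpt, MeasureTheory.integral_const_mul,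
    swap_lemma h₁ h₂ h₁₂ hx]
  -- left-hand side
  simp only [PD]
  rw [intervalIntegral.integral_of_le zero_le_one, integral_Ioc_eq_integral_Ioo,
    ← scale_integral h₁ h₂ hx]
  set I := ∫ t in Ioo (0:ℝ) x, t ^ (β₂-1) * (1 + t) ^ (β₁-1) * (x - t) ^ (-(β₁+β₂-1)) with hI
  set C := (Gamma (β₁+β₂-1) * Gamma (1-(β₁+β₂-1)))⁻¹ with hC
  calc C * I = C * ((Gamma β₁ * Gamma (1-β₁))⁻¹ * (Gamma (1-β₁) * Gamma β₁)) * I := by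
        rw [hK, mul_one]
    _ = (Gamma β₁ * Gamma (1-β₁))⁻¹ * C * (Gamma (1-β₁) * Gamma β₁ * I) := by ring
end

section
/- Let β₁, β₂ ∈ (0,1) with β₁₂ := β₁ + β₂ − 1 ∈ (0,1) and let a > 0. Then the function x ↦ P_D^{β₁,β₂}(x | a), x > 0, takes values in [0,1], is nondecreasing in x, tends to 0 as x → 0+, and tends to 1 as x → ∞. In particular it is the cumulative distribution function of a probability measure on (0,∞). -/
open MeasureTheory Real Filter Topology

/-- The real Beta function value `∫₀¹ y^(s-1) (1-y)^(-s) dy = Γ(s)Γ(1-s)` ingredients: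
integrability of the integrand. -/
lemma aux_beta_integrable {s : ℝ} (hs : 0 < s) (hs1 : s < 1) :
    IntervalIntegrable (fun y : ℝ => y ^ (s - 1) * (1 - y) ^ (-s)) volume 0 1 := by
  rw [intervalIntegrable_iff_integrableOn_Ioc_of_le (by norm_num)]
  have h1 : IntegrableOn (fun y : ℝ => y ^ (s - 1) * (1 - y) ^ (-s))
      (Set.Icc (0 : ℝ) (1/2)) volume := by
    apply IntegrableOn.mul_continuousOn
    · have := intervalIntegral.intervalIntegrable_rpow' (a := (0:ℝ)) (b := 1/2) (r := s - 1) (by linarith)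
      rw [intervalIntegrable_iff_integrableOn_Ioc_of_le (by norm_num)] at this
      rwa [integrableOn_Icc_iff_integrableOn_Ioc]
    · apply ContinuousOn.rpow_const (by fun_prop)
      intro y hy
      left
      have := hy.2
      intro hcon
      have : y = 1 := by linarith [sub_eq_zero.mp hcon]
      norm_num [this] at hy
    · exact isCompact_Icc
  have h2 : IntegrableOn (fun y : ℝ => y ^ (s - 1) * (1 - y) ^ (-s))
      (Set.Icc (1/2 : ℝ) 1) volume := by
    apply IntegrableOn.continuousOn_mul
    · apply ContinuousOn.rpow_const (by fun_prop)
      intro y hy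
      left
      have := hy.1
      positivity
    · have base := intervalIntegral.intervalIntegrable_rpow' (a := (0:ℝ)) (b := 1/2) (r := -s) (by linarith)
      have := (base.comp_sub_left 1).symm
      norm_num at this
      rw [intervalIntegrable_iff_integrableOn_Ioc_of_le (by norm_num)] at this
      rw [integrableOn_Icc_iff_integrableOn_Ioc]
      exact this
    · exact isCompact_Icc
  have : Set.Ioc (0:ℝ) 1 ⊆ Set.Icc (0:ℝ) (1/2) ∪ Set.Icc (1/2 : ℝ) 1 := by
    intro y hy
    rcases le_or_gt y (1/2) with h | h
    · exact Or.inl ⟨hy.1.le, h⟩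
    · exact Or.inr ⟨h.le, hy.2⟩
  exact (h1.union h2).mono_set this

/-- The real Beta function value `∫₀¹ y^(s-1) (1-y)^(-s) dy = Γ(s)Γ(1-s)`. -/
lemma aux_beta_value {s : ℝ} (hs : 0 < s) (hs1 : s < 1) :
    ∫ y in (0:ℝ)..1, y ^ (s - 1) * (1 - y) ^ (-s) = Gamma s * Gamma (1 - s) := by
  have h := Complex.Gamma_mul_Gamma_eq_betaIntegral (s := (s : ℂ)) (t := ((1 - s : ℝ) : ℂ))
    (by simpa using hs) (by simp; linarith)
  rw [show (s : ℂ) + ((1 - s : ℝ) : ℂ) = 1 by push_cast; ring, Complex.Gamma_one, one_mul] at h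
  have h2 : Complex.betaIntegral (s : ℂ) ((1 - s : ℝ) : ℂ)
      = ((∫ y in (0:ℝ)..1, y ^ (s - 1) * (1 - y) ^ (-s) : ℝ) : ℂ) := by
    rw [Complex.betaIntegral, ← intervalIntegral.integral_ofReal]
    apply intervalIntegral.integral_congr
    intro x hx
    rw [Set.uIcc_of_le (by norm_num)] at hx
    simp only [Complex.ofReal_mul, Complex.ofReal_cpow hx.1,
      Complex.ofReal_cpow (show (0:ℝ) ≤ 1 - x by linarith [hx.2])]
    push_cast
    ring_nf
  rw [h2, Complex.Gamma_ofReal, Complex.Gamma_ofReal] at h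
  rw [← Complex.ofReal_mul] at h
  exact_mod_cast h.symm

/-- For `β₁, β₂ ∈ (0,1)` with `β₁₂ = β₁+β₂−1 ∈ (0,1)` and `a > 0`, the function
`x ↦ P_D^{β₁,β₂}(x ∣ a)` on `(0,∞)` takes values in `[0,1]`, is nondecreasing,
tends to `0` at `0+` and to `1` at `∞`; in particular it is the cumulative
distribution function of a probability measure concentrated on `(0,∞)`. -/
theorem stmt6 (β₁ β₂ a : ℝ) (h₁ : β₁ ∈ Set.Ioo (0 : ℝ) 1) (h₂ : β₂ ∈ Set.Ioo (0 : ℝ) 1)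
    (h₁₂ : β₁ + β₂ - 1 ∈ Set.Ioo (0 : ℝ) 1) (ha : 0 < a) :
    (∀ x : ℝ, 0 < x → PD β₁ β₂ x a ∈ Set.Icc (0 : ℝ) 1) ∧
    (∀ x y : ℝ, 0 < x → x ≤ y → PD β₁ β₂ x a ≤ PD β₁ β₂ y a) ∧
    Tendsto (fun x => PD β₁ β₂ x a) (𝓝[>] (0 : ℝ)) (𝓝 0) ∧
    Tendsto (fun x => PD β₁ β₂ x a) atTop (𝓝 1) ∧
    ∃ μ : Measure ℝ, IsProbabilityMeasure μ ∧ μ (Set.Ioi (0 : ℝ))ᶜ = 0 ∧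
      ∀ x : ℝ, 0 < x → μ (Set.Iic x) = ENNReal.ofReal (PD β₁ β₂ x a) := by
  obtain ⟨hb1, hb1'⟩ := h₁
  obtain ⟨hb2, hb2'⟩ := h₂
  obtain ⟨hs, hs1⟩ := h₁₂
  set C : ℝ := Gamma (β₁ + β₂ - 1) * Gamma (1 - (β₁ + β₂ - 1)) with hC_def
  have hC : 0 < C := mul_pos (Gamma_pos_of_pos hs) (Gamma_pos_of_pos (by linarith))
  set f : ℝ → ℝ → ℝ :=
    fun x y => (a / x + y) ^ (β₁ - 1) * y ^ (β₂ - 1) * (1 - y) ^ (-(β₁ + β₂ - 1)) with hf_def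
  set g : ℝ → ℝ := fun y => y ^ (β₁ + β₂ - 1 - 1) * (1 - y) ^ (-(β₁ + β₂ - 1)) with hg_def
  have hgint : IntervalIntegrable g volume 0 1 := aux_beta_integrable hs hs1
  have hgval : ∫ y in (0:ℝ)..1, g y = C := aux_beta_value hs hs1
  have hPD : ∀ x, PD β₁ β₂ x a = C⁻¹ * ∫ y in (0:ℝ)..1, f x y := fun x => rfl
  -- measurability
  have hmeas : ∀ x, AEStronglyMeasurable (f x) (volume.restrict (Set.uIoc (0:ℝ) 1)) := by
    intro x
    refine Measurable.aestronglyMeasurable (by fun_prop)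
  -- nonnegativity on Icc
  have hnn : ∀ x : ℝ, 0 < x → ∀ y ∈ Set.Icc (0:ℝ) 1, 0 ≤ f x y := by
    intro x hx y hy
    have h1 : (0:ℝ) ≤ a / x + y := add_nonneg (div_pos ha hx).le hy.1
    exact mul_nonneg (mul_nonneg (rpow_nonneg h1 _) (rpow_nonneg hy.1 _))
      (rpow_nonneg (by linarith [hy.2]) _)
  -- bound f x y ≤ g y on Icc
  have hle : ∀ x : ℝ, 0 < x → ∀ y ∈ Set.Icc (0:ℝ) 1, f x y ≤ g y := by
    intro x hx y hy
    rcases eq_or_lt_of_le hy.1 with h0 | h0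
    · simp only [hf_def, hg_def, ← h0, Real.zero_rpow (by intro h; linarith : β₂ - 1 ≠ 0),
        Real.zero_rpow (by intro h; linarith : β₁ + β₂ - 1 - 1 ≠ 0), mul_zero, zero_mul, mul_zero]
      simp
    · have h1 : (a / x + y) ^ (β₁ - 1) ≤ y ^ (β₁ - 1) := by
        apply rpow_le_rpow_of_nonpos h0 (le_add_of_nonneg_left (div_pos ha hx).le) (by linarith)
      calc f x y ≤ y ^ (β₁ - 1) * y ^ (β₂ - 1) * (1 - y) ^ (-(β₁ + β₂ - 1)) := by
            exact mul_le_mul_of_nonneg_right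
              (mul_le_mul_of_nonneg_right h1 (rpow_nonneg h0.le _))
              (rpow_nonneg (by linarith [hy.2]) _)
        _ = g y := by
            rw [hg_def, ← Real.rpow_add h0, show β₁ - 1 + (β₂ - 1) = β₁ + β₂ - 1 - 1 by ring]
  -- integrability of f x
  have hfint : ∀ x : ℝ, 0 < x → IntervalIntegrable (f x) volume 0 1 := by
    intro x hx
    rw [intervalIntegrable_iff] at hgint ⊢
    refine MeasureTheory.Integrable.mono hgint (hmeas x) ?_
    rw [ae_restrict_iff' measurableSet_uIoc]
    refine Filter.Eventually.of_forall fun y hy => ?_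
    rw [Set.uIoc_of_le (by norm_num)] at hy
    have hy' : y ∈ Set.Icc (0:ℝ) 1 := ⟨hy.1.le, hy.2⟩
    rw [Real.norm_eq_abs, Real.norm_eq_abs, abs_of_nonneg (hnn x hx y hy')]
    exact (hle x hx y hy').trans (le_abs_self _)
  -- monotonicity of f in x
  have hmono : ∀ x x' : ℝ, 0 < x → x ≤ x' → ∀ y ∈ Set.Icc (0:ℝ) 1, f x y ≤ f x' y := by
    intro x x' hx hxx' y hy
    have hx' : 0 < x' := lt_of_lt_of_le hx hxx'
    have h1 : (a / x + y) ^ (β₁ - 1) ≤ (a / x' + y) ^ (β₁ - 1) := by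
      apply rpow_le_rpow_of_nonpos (add_pos_of_pos_of_nonneg (div_pos ha hx') hy.1)
      · have : a / x' ≤ a / x := by gcongr
        linarith
      · linarith
    exact mul_le_mul_of_nonneg_right (mul_le_mul_of_nonneg_right h1 (rpow_nonneg hy.1 _))
      (rpow_nonneg (by linarith [hy.2]) _)
  -- range in [0,1]
  have hIcc : ∀ x : ℝ, 0 < x → PD β₁ β₂ x a ∈ Set.Icc (0 : ℝ) 1 := by
    intro x hx
    rw [hPD]
    constructor
    · have := intervalIntegral.integral_nonneg (μ := volume) (f := f x) (by norm_num) (hnn x hx)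
      positivity
    · have h := intervalIntegral.integral_mono_on (by norm_num) (hfint x hx) hgint (hle x hx)
      rw [hgval] at h
      calc C⁻¹ * ∫ y in (0:ℝ)..1, f x y ≤ C⁻¹ * C := by
            exact mul_le_mul_of_nonneg_left h (inv_nonneg.2 hC.le)
        _ = 1 := inv_mul_cancel₀ hC.ne'
  -- monotone
  have hMono : ∀ x y : ℝ, 0 < x → x ≤ y → PD β₁ β₂ x a ≤ PD β₁ β₂ y a := by
    intro x y hx hxy
    rw [hPD, hPD]
    refine mul_le_mul_of_nonneg_left ?_ (inv_nonneg.2 hC.le)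
    exact intervalIntegral.integral_mono_on (by norm_num) (hfint x hx)
      (hfint y (lt_of_lt_of_le hx hxy)) (hmono x y hx hxy)
  -- tendsto 0 at 0+
  have hT0 : Tendsto (fun x => PD β₁ β₂ x a) (𝓝[>] (0 : ℝ)) (𝓝 0) := by
    have key : Tendsto (fun x => ∫ y in (0:ℝ)..1, f x y) (𝓝[>] (0:ℝ))
        (𝓝 (∫ y in (0:ℝ)..1, (0:ℝ))) := by
      apply intervalIntegral.tendsto_integral_filter_of_dominated_convergence g
        (Filter.Eventually.of_forall hmeas) ?_ hgint ?_
      · filter_upwards [self_mem_nhdsWithin] with x hx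
        refine Filter.Eventually.of_forall fun y hy => ?_
        rw [Set.uIoc_of_le (by norm_num)] at hy
        have hy' : y ∈ Set.Icc (0:ℝ) 1 := ⟨hy.1.le, hy.2⟩
        rw [Real.norm_eq_abs, abs_of_nonneg (hnn x hx y hy')]
        exact hle x hx y hy'
      · refine Filter.Eventually.of_forall fun y hy => ?_
        rw [Set.uIoc_of_le (by norm_num)] at hy
        have h1 : Tendsto (fun x : ℝ => a / x + y) (𝓝[>] (0:ℝ)) atTop := by
          apply tendsto_atTop_add_const_right
          exact Tendsto.const_mul_atTop ha (by simpa using tendsto_inv_nhdsGT_zero)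
            |>.congr (fun x => by rw [div_eq_mul_inv])
        have h2 : Tendsto (fun x : ℝ => (a / x + y) ^ (β₁ - 1)) (𝓝[>] (0:ℝ)) (𝓝 0) := by
          have := (tendsto_rpow_neg_atTop (y := 1 - β₁) (by linarith)).comp h1
          simpa [Function.comp_def, show -(1 - β₁) = β₁ - 1 by ring] using this
        have h4 := (h2.mul_const (y ^ (β₂ - 1))).mul_const ((1 - y) ^ (-(β₁ + β₂ - 1)))
        rw [zero_mul, zero_mul] at h4
        exact h4
    simp only [intervalIntegral.integral_zero] at key
    have := key.const_mul C⁻¹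
    simpa [hPD] using this
  -- tendsto 1 at ∞
  have hT1 : Tendsto (fun x => PD β₁ β₂ x a) atTop (𝓝 1) := by
    have key : Tendsto (fun x => ∫ y in (0:ℝ)..1, f x y) atTop
        (𝓝 (∫ y in (0:ℝ)..1, g y)) := by
      apply intervalIntegral.tendsto_integral_filter_of_dominated_convergence g
        (Filter.Eventually.of_forall hmeas) ?_ hgint ?_
      · filter_upwards [eventually_gt_atTop (0:ℝ)] with x hx
        refine Filter.Eventually.of_forall fun y hy => ?_
        rw [Set.uIoc_of_le (by norm_num)] at hy
        have hy' : y ∈ Set.Icc (0:ℝ) 1 := ⟨hy.1.le, hy.2⟩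
        rw [Real.norm_eq_abs, abs_of_nonneg (hnn x hx y hy')]
        exact hle x hx y hy'
      · refine Filter.Eventually.of_forall fun y hy => ?_
        rw [Set.uIoc_of_le (by norm_num)] at hy
        have h1 : Tendsto (fun x : ℝ => a / x + y) atTop (𝓝 y) := by
          have := Tendsto.div_atTop (tendsto_const_nhds (x := a)) tendsto_id
          simpa using this.add_const y
        have h2 : Tendsto (fun x : ℝ => (a / x + y) ^ (β₁ - 1)) atTop (𝓝 (y ^ (β₁ - 1))) := by
          exact ((Real.continuousAt_rpow_const y (β₁ - 1) (Or.inl hy.1.ne')).tendsto).comp h1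
        have h3 := (h2.mul_const (y ^ (β₂ - 1))).mul_const ((1 - y) ^ (-(β₁ + β₂ - 1)))
        have heq : y ^ (β₁ - 1) * y ^ (β₂ - 1) * (1 - y) ^ (-(β₁ + β₂ - 1)) = g y := by
          rw [hg_def, ← Real.rpow_add hy.1, show β₁ - 1 + (β₂ - 1) = β₁ + β₂ - 1 - 1 by ring]
        rw [heq] at h3
        exact h3
    rw [hgval] at key
    have := key.const_mul C⁻¹
    simp only [inv_mul_cancel₀ hC.ne'] at this
    simpa [hPD] using this
  refine ⟨hIcc, hMono, hT0, hT1, ?_⟩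
  -- continuity of PD on (0, ∞)
  have hcont : ∀ x₀ : ℝ, 0 < x₀ → ContinuousAt (fun x => PD β₁ β₂ x a) x₀ := by
    intro x₀ hx₀
    have key : ContinuousAt (fun x => ∫ y in (0:ℝ)..1, f x y) x₀ := by
      apply intervalIntegral.continuousAt_of_dominated_interval
        (Filter.Eventually.of_forall hmeas) ?_ hgint ?_
      · filter_upwards [eventually_gt_nhds hx₀] with x hx
        refine Filter.Eventually.of_forall fun y hy => ?_
        rw [Set.uIoc_of_le (by norm_num)] at hy
        have hy' : y ∈ Set.Icc (0:ℝ) 1 := ⟨hy.1.le, hy.2⟩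
        rw [Real.norm_eq_abs, abs_of_nonneg (hnn x hx y hy')]
        exact hle x hx y hy'
      · refine Filter.Eventually.of_forall fun y hy => ?_
        rw [Set.uIoc_of_le (by norm_num)] at hy
        have hbase : ContinuousAt (fun x : ℝ => a / x + y) x₀ :=
          (continuousAt_const.div continuousAt_id hx₀.ne').add continuousAt_const
        have h2 : ContinuousAt (fun x : ℝ => (a / x + y) ^ (β₁ - 1)) x₀ := by
          apply hbase.rpow_const
          exact Or.inl (ne_of_gt (add_pos (div_pos ha hx₀) hy.1))
        exact (h2.mul continuousAt_const).mul continuousAt_const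
    simpa [hPD] using key.const_mul C⁻¹
  -- the Stieltjes function
  set Fn : ℝ → ℝ := fun x => if 0 < x then PD β₁ β₂ x a else 0 with hFn_def
  have hFmono : Monotone Fn := by
    intro x y hxy
    by_cases hx : 0 < x
    · have hy : 0 < y := lt_of_lt_of_le hx hxy
      simp only [hFn_def, if_pos hx, if_pos hy]
      exact hMono x y hx hxy
    · by_cases hy : 0 < y
      · simp only [hFn_def, if_neg hx, if_pos hy]
        exact (hIcc y hy).1
      · simp only [hFn_def, if_neg hx, if_neg hy]
        exact le_rfl
  have hFright : ∀ x : ℝ, ContinuousWithinAt Fn (Set.Ici x) x := by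
    intro x
    rcases lt_trichotomy x 0 with hx | hx | hx
    · have hev : Fn =ᶠ[𝓝 x] fun _ => (0:ℝ) := by
        filter_upwards [eventually_lt_nhds hx] with z hz
        simp [hFn_def, not_lt.2 hz.le, asymm hz]
      exact (continuousAt_const.congr hev.symm).continuousWithinAt
    · subst hx
      have h0 : Fn 0 = 0 := by simp [hFn_def]
      rw [ContinuousWithinAt, h0, show Set.Ici (0:ℝ) = insert 0 (Set.Ioi 0) by
        rw [Set.Ioi_insert], nhdsWithin_insert, tendsto_sup]
      constructor
      · rw [tendsto_pure_left]
        intro s hs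
        simpa [h0] using mem_of_mem_nhds hs
      · refine hT0.congr' ?_
        filter_upwards [self_mem_nhdsWithin] with z hz
        simp [hFn_def, Set.mem_Ioi.mp hz]
    · have hev : Fn =ᶠ[𝓝 x] fun z => PD β₁ β₂ z a := by
        filter_upwards [eventually_gt_nhds hx] with z hz
        simp [hFn_def, hz]
      exact ((hcont x hx).congr hev.symm).continuousWithinAt
  set F : StieltjesFunction ℝ := ⟨Fn, hFmono, hFright⟩ with hF_def
  have hbot : Tendsto F atBot (𝓝 0) := by
    refine tendsto_const_nhds.congr' ?_
    filter_upwards [eventually_lt_atBot (0:ℝ)] with z hz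
    simp [hF_def, hFn_def, asymm hz]
  have htop : Tendsto F atTop (𝓝 1) := by
    refine hT1.congr' ?_
    filter_upwards [eventually_gt_atTop (0:ℝ)] with z hz
    simp [hF_def, hFn_def, hz]
  refine ⟨F.measure, ⟨?_⟩, ?_, ?_⟩
  · rw [F.measure_univ hbot htop]
    norm_num
  · rw [Set.compl_Ioi, F.measure_Iic hbot]
    simp [hF_def, hFn_def]
  · intro x hx
    rw [F.measure_Iic hbot]
    simp [hF_def, hFn_def, hx]
end

section
/- Let β₁, β₂ ∈ (0,1) with β* := β₁ + β₂ − 1 ∈ (0,1). Then for every x ∈ (0,1], ∫_0^x (1−β₁) y₁^{−β₁} [ ∫_0^{y₁} (1−β₂) y₂^{−β₂} P_D^{β₂,β₁}(x−y₁ | y₁−y₂) dy₂ ] dy₁ + ∫_0^x (1−β₁) y₁^{−β₁} [ ∫_{y₁}^x (1−β₂) y₂^{−β₂} P_D^{β₁,β₂}(x−y₂ | y₂−y₁) dy₂ ] dy₁ = x^{1−β*} · Γ(β₁)Γ(2−β₁)Γ(β₂)Γ(2−β₂) / (Γ(β*)Γ(2−β*)). -/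
open MeasureTheory Real

open Set intervalIntegral

-- L1: real beta integral
lemma betaReal {p q : ℝ} (hp : 0 < p) (hq : 0 < q) :
    ∫ s in (0:ℝ)..1, s ^ (p - 1) * (1 - s) ^ (q - 1) = Gamma p * Gamma q / Gamma (p + q) := by
  have h := Complex.Gamma_mul_Gamma_eq_betaIntegral (s := (p:ℂ)) (t := (q:ℂ))
    (by simpa using hp) (by simpa using hq)
  have hG : Complex.Gamma (p + q) ≠ 0 := by
    rw [show ((p:ℂ) + q) = ((p + q : ℝ) : ℂ) by push_cast; ring, Complex.Gamma_ofReal]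
    exact_mod_cast (Real.Gamma_pos_of_pos (by linarith)).ne'
  have hbeta : Complex.betaIntegral p q = ((∫ s in (0:ℝ)..1, s ^ (p - 1) * (1 - s) ^ (q - 1) : ℝ) : ℂ) := by
    rw [Complex.betaIntegral, ← intervalIntegral.integral_ofReal]
    refine intervalIntegral.integral_congr fun s hs => ?_
    rw [uIcc_of_le zero_le_one] at hs
    have e1 : ((p:ℂ) - 1) = ((p - 1 : ℝ) : ℂ) := by push_cast; ring
    have e2 : ((q:ℂ) - 1) = ((q - 1 : ℝ) : ℂ) := by push_cast; ring
    have e3 : (1 - (s:ℂ)) = ((1 - s : ℝ) : ℂ) := by push_cast; ring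
    rw [e1, e2, e3, ← Complex.ofReal_cpow hs.1,
      ← Complex.ofReal_cpow (by linarith [hs.2] : (0:ℝ) ≤ 1 - s), Complex.ofReal_mul]
  have := h
  rw [hbeta] at this
  have h2 : (Complex.Gamma p * Complex.Gamma q) / Complex.Gamma (p + q)
      = ((∫ s in (0:ℝ)..1, s ^ (p - 1) * (1 - s) ^ (q - 1) : ℝ) : ℂ) := by
    rw [this]; field_simp
  rw [show ((p:ℂ)) = ((p:ℝ):ℂ) by norm_cast, show ((q:ℂ)) = ((q:ℝ):ℂ) by norm_cast] at h2
  rw [Complex.Gamma_ofReal, Complex.Gamma_ofReal] at h2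
  have h3 : (((Gamma p * Gamma q / Gamma (p + q) : ℝ)) : ℂ)
      = ((∫ s in (0:ℝ)..1, s ^ (p - 1) * (1 - s) ^ (q - 1) : ℝ) : ℂ) := by
    push_cast
    rw [← h2]
    congr 1
    rw [show ((p:ℂ) + q) = ((p + q : ℝ) : ℂ) by push_cast; ring, Complex.Gamma_ofReal]
  exact_mod_cast h3.symm

-- L2: scaled/shifted beta integral
lemma betaScaled {p q a c : ℝ} (hp : 0 < p) (hq : 0 < q) (hac : a < c) :
    ∫ t in a..c, (t - a) ^ (p - 1) * (c - t) ^ (q - 1)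
      = (c - a) ^ (p + q - 1) * (Gamma p * Gamma q / Gamma (p + q)) := by
  set s : ℝ := c - a with hs
  have hs0 : 0 < s := by simp [hs]; linarith
  have key := intervalIntegral.integral_comp_mul_add
    (f := fun t => (t - a) ^ (p - 1) * (c - t) ^ (q - 1)) (a := (0:ℝ)) (b := 1) hs0.ne' a
  have h1 : s * 0 + a = a := by ring
  have h2 : s * 1 + a = c := by rw [hs]; ring
  rw [h1, h2] at key
  have congr1 : (∫ u in (0:ℝ)..1, (s * u + a - a) ^ (p - 1) * (c - (s * u + a)) ^ (q - 1))
      = ∫ u in (0:ℝ)..1, (s ^ (p - 1) * s ^ (q - 1)) * (u ^ (p - 1) * (1 - u) ^ (q - 1)) := by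
    refine intervalIntegral.integral_congr fun u hu => ?_
    rw [uIcc_of_le zero_le_one] at hu
    have e1 : s * u + a - a = s * u := by ring
    have e2 : c - (s * u + a) = s * (1 - u) := by rw [hs]; ring
    rw [e1, e2, Real.mul_rpow hs0.le hu.1, Real.mul_rpow hs0.le (by linarith [hu.2])]
    ring
  rw [congr1, intervalIntegral.integral_const_mul, betaReal hp hq, smul_eq_mul] at key
  have : (∫ t in a..c, (t - a) ^ (p - 1) * (c - t) ^ (q - 1))
      = s * (s⁻¹ * (∫ t in a..c, (t - a) ^ (p - 1) * (c - t) ^ (q - 1))) := by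
    field_simp
  rw [this, ← key]
  rw [show s * (s ^ (p - 1) * s ^ (q - 1) * (Gamma p * Gamma q / Gamma (p + q)))
      = (s ^ (1:ℝ) * s ^ (p - 1) * s ^ (q - 1)) * (Gamma p * Gamma q / Gamma (p + q)) by
    rw [Real.rpow_one]; ring]
  rw [← Real.rpow_add hs0, ← Real.rpow_add hs0]
  ring_nf

-- L3a
lemma II_left {p a b : ℝ} (hp : -1 < p) {h : ℝ → ℝ} (hab : a ≤ b)
    (hh : ContinuousOn h (Icc a b)) :
    IntervalIntegrable (fun t => (t - a) ^ p * h t) volume a b := by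
  have h1 : IntervalIntegrable (fun t => (t - a) ^ p) volume a b := by
    have := (intervalIntegral.intervalIntegrable_rpow' (a := 0) (b := b - a) hp).comp_sub_right a
    simpa using this
  refine h1.mul_continuousOn ?_
  rwa [uIcc_of_le hab]

-- L3b
lemma II_right {q a b : ℝ} (hq : -1 < q) {h : ℝ → ℝ} (hab : a ≤ b)
    (hh : ContinuousOn h (Icc a b)) :
    IntervalIntegrable (fun t => (b - t) ^ q * h t) volume a b := by
  have h1 : IntervalIntegrable (fun t => (b - t) ^ q) volume a b := by
    have := (intervalIntegral.intervalIntegrable_rpow' (a := b - a) (b := 0) hq).comp_sub_left b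
    simpa using this
  refine h1.mul_continuousOn ?_
  rwa [uIcc_of_le hab]

-- L3c
lemma II_both {p q a b : ℝ} (hp : -1 < p) (hq : -1 < q) (hab : a < b) {h : ℝ → ℝ}
    (hh : ContinuousOn h (Icc a b)) :
    IntervalIntegrable (fun t => (t - a) ^ p * ((b - t) ^ q * h t)) volume a b := by
  set m := (a + b) / 2 with hm
  have ham : a < m := by rw [hm]; linarith
  have hmb : m < b := by rw [hm]; linarith
  have cright : ContinuousOn (fun t : ℝ => (b - t) ^ q) (Icc a m) := by
    refine ContinuousOn.rpow_const (continuous_const.sub continuous_id).continuousOn ?_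
    intro t ht; left; have : t ≤ m := ht.2; intro hbt; nlinarith [hmb]
  have cleft : ContinuousOn (fun t : ℝ => (t - a) ^ p) (Icc m b) := by
    refine ContinuousOn.rpow_const (continuous_id.sub continuous_const).continuousOn ?_
    intro t ht; left; have : m ≤ t := ht.1; intro hta; nlinarith [ham]
  have left : IntervalIntegrable (fun t => (t - a) ^ p * ((b - t) ^ q * h t)) volume a m :=
    II_left hp ham.le (cright.mul (hh.mono (Icc_subset_Icc le_rfl hmb.le)))
  have right : IntervalIntegrable (fun t => (t - a) ^ p * ((b - t) ^ q * h t)) volume m b := by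
    have : IntervalIntegrable (fun t => (b - t) ^ q * ((t - a) ^ p * h t)) volume m b :=
      II_right hq hmb.le (cleft.mul (hh.mono (Icc_subset_Icc ham.le le_rfl)))
    have e : (fun t : ℝ => (b - t) ^ q * ((t - a) ^ p * h t))
        = fun t : ℝ => (t - a) ^ p * ((b - t) ^ q * h t) := by funext t; ring
    rwa [e] at this
  exact left.trans right


-- L4
lemma PD_eq {β γ u v w : ℝ} (h1 : u < v) (h2 : v < w) :
    PD γ β (w - v) (v - u) = (Gamma (γ + β - 1) * Gamma (1 - (γ + β - 1)))⁻¹ *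
      ∫ t in v..w, (t - u) ^ (γ - 1) * ((t - v) ^ (β - 1) * (w - t) ^ (-(γ + β - 1))) := by
  set s : ℝ := w - v with hsdef
  have hs : 0 < s := by simp [hsdef]; linarith
  set f : ℝ → ℝ := fun t => (t - u) ^ (γ - 1) * ((t - v) ^ (β - 1) * (w - t) ^ (-(γ + β - 1)))
    with hf
  have key := intervalIntegral.integral_comp_mul_add (f := f) (a := (0:ℝ)) (b := 1) hs.ne' v
  have h1' : s * 0 + v = v := by ring
  have h2' : s * 1 + v = w := by rw [hsdef]; ring
  rw [h1', h2'] at key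
  have congr1 : (∫ y in (0:ℝ)..1,
        ((v - u) / (w - v) + y) ^ (γ - 1) * y ^ (β - 1) * (1 - y) ^ (-(γ + β - 1)))
      = ∫ y in (0:ℝ)..1, s * f (s * y + v) := by
    refine intervalIntegral.integral_congr fun y hy => ?_
    rw [uIcc_of_le zero_le_one] at hy
    have e1 : s * y + v - u = s * ((v - u) / s + y) := by field_simp; ring
    have e2 : s * y + v - v = s * y := by ring
    have e3 : w - (s * y + v) = s * (1 - y) := by rw [hsdef]; ring
    have hvu : 0 ≤ (v - u) / s := div_nonneg (by linarith) hs.le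
    rw [hf]
    simp only []
    rw [e1, e2, e3, Real.mul_rpow hs.le (by linarith [hy.1] : (0:ℝ) ≤ (v - u) / s + y),
      Real.mul_rpow hs.le hy.1, Real.mul_rpow hs.le (by linarith [hy.2])]
    have hpow : s * (s ^ (γ - 1) * ((v-u)/s + y) ^ (γ - 1) *
        (s ^ (β - 1) * y ^ (β - 1) * (s ^ (-(γ + β - 1)) * (1 - y) ^ (-(γ + β - 1)))))
        = (s ^ (1:ℝ) * s ^ (γ - 1) * s ^ (β - 1) * s ^ (-(γ + β - 1))) *
          (((v-u)/s + y) ^ (γ - 1) * y ^ (β - 1) * (1 - y) ^ (-(γ + β - 1))) := by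
      rw [Real.rpow_one]; ring
    rw [hpow, ← Real.rpow_add hs, ← Real.rpow_add hs, ← Real.rpow_add hs]
    rw [show (1:ℝ) + (γ - 1) + (β - 1) + -(γ + β - 1) = 0 by ring, Real.rpow_zero, one_mul]
  rw [PD, congr1, intervalIntegral.integral_const_mul, key, smul_eq_mul]
  rw [show s * (s⁻¹ * ∫ t in v..w, f t) = ∫ t in v..w, f t by field_simp]

-- convenient: integrability of the G factor and the k factor
lemma G_int {β₁ β₂ x y₁ : ℝ} (hβ₁0 : 0 < β₁) (hβ₁1 : β₁ < 1) (hb1 : β₁ + β₂ - 1 < 1)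
    (hy₁x : y₁ < x) :
    IntegrableOn (fun t : ℝ => (t - y₁) ^ (β₁ - 1) * (x - t) ^ (-(β₁ + β₂ - 1))) (Ioo y₁ x)
      volume := by
  have := II_both (p := β₁ - 1) (q := -(β₁ + β₂ - 1)) (a := y₁) (b := x)
    (by linarith) (by linarith) hy₁x (h := fun _ => 1) continuousOn_const
  rw [intervalIntegrable_iff_integrableOn_Ioo_of_le hy₁x.le] at this
  simpa using this

lemma k_int {β₂ c d : ℝ} (hβ₂0 : 0 < β₂) (hβ₂1 : β₂ < 1) (hc : 0 < c) (hcd : c ≤ d) :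
    IntegrableOn (fun t : ℝ => t ^ (-β₂) * (d - t) ^ (β₂ - 1)) (Ioo 0 c) volume := by
  rcases eq_or_lt_of_le hcd with rfl | hlt
  · have := II_both (p := -β₂) (q := β₂ - 1) (a := 0) (b := c)
      (by linarith) (by linarith) hc (h := fun _ => 1) continuousOn_const
    rw [intervalIntegrable_iff_integrableOn_Ioo_of_le hc.le] at this
    simpa using this
  · have := II_left (p := -β₂) (a := 0) (b := c) (by linarith)
      (h := fun t => (d - t) ^ (β₂ - 1)) hc.le ?_
    · rw [intervalIntegrable_iff_integrableOn_Ioo_of_le hc.le] at this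
      simpa using this
    · refine ContinuousOn.rpow_const (continuous_const.sub continuous_id).continuousOn ?_
      intro t ht; left; have := ht.2; intro h0; nlinarith

lemma k_int_full {β₂ d : ℝ} (hβ₂0 : 0 < β₂) (hβ₂1 : β₂ < 1) (hd : 0 < d) :
    IntegrableOn (fun t : ℝ => t ^ (-β₂) * (d - t) ^ (β₂ - 1)) (Ioo 0 d) volume :=
  k_int hβ₂0 hβ₂1 hd le_rfl

lemma inner1_eq {β₁ β₂ x y₁ : ℝ} (hβ₁0 : 0 < β₁) (hβ₁1 : β₁ < 1)
    (hβ₂0 : 0 < β₂) (hβ₂1 : β₂ < 1) (hb1 : β₁ + β₂ - 1 < 1)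
    (hy₁ : 0 < y₁) (hy₁x : y₁ < x) :
    (∫ y₂ in (0:ℝ)..y₁, (1 - β₂) * y₂ ^ (-β₂) * PD β₂ β₁ (x - y₁) (y₁ - y₂))
      = (1 - β₂) * (Gamma (β₁ + β₂ - 1) * Gamma (1 - (β₁ + β₂ - 1)))⁻¹ *
        ∫ y₃ in Ioo y₁ x, (∫ y₂ in Ioo 0 y₁, y₂ ^ (-β₂) * (y₃ - y₂) ^ (β₂ - 1)) *
          ((y₃ - y₁) ^ (β₁ - 1) * (x - y₃) ^ (-(β₁ + β₂ - 1))) := by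
  set b : ℝ := β₁ + β₂ - 1 with hbdef
  set K : ℝ := (Gamma b * Gamma (1 - b))⁻¹ with hKdef
  set k : ℝ → ℝ → ℝ := fun y₂ y₃ => y₂ ^ (-β₂) * (y₃ - y₂) ^ (β₂ - 1) with hk
  set G : ℝ → ℝ := fun y₃ => (y₃ - y₁) ^ (β₁ - 1) * (x - y₃) ^ (-b) with hG
  -- Step a+b: rewrite the LHS as a set integral with PD replaced
  have step1 : (∫ y₂ in (0:ℝ)..y₁, (1 - β₂) * y₂ ^ (-β₂) * PD β₂ β₁ (x - y₁) (y₁ - y₂))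
      = ∫ y₂ in Ioo 0 y₁, (1 - β₂) * K * ∫ y₃ in Ioo y₁ x, k y₂ y₃ * G y₃ := by
    rw [intervalIntegral.integral_of_le hy₁.le, MeasureTheory.integral_Ioc_eq_integral_Ioo]
    refine setIntegral_congr_fun measurableSet_Ioo fun y₂ hy₂ => ?_
    have hPD := PD_eq (β := β₁) (γ := β₂) (u := y₂) (v := y₁) (w := x) hy₂.2 hy₁x
    rw [show β₂ + β₁ - 1 = β₁ + β₂ - 1 by ring] at hPD
    rw [hPD, intervalIntegral.integral_of_le hy₁x.le, MeasureTheory.integral_Ioc_eq_integral_Ioo]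
    rw [show (1 - β₂) * y₂ ^ (-β₂) * ((Gamma (β₁+β₂-1) * Gamma (1 - (β₁+β₂-1)))⁻¹ *
        ∫ t in Ioo y₁ x, (t - y₂) ^ (β₂-1) * ((t - y₁) ^ (β₁-1) * (x - t) ^ (-(β₁+β₂-1))))
      = (1 - β₂) * K * (y₂ ^ (-β₂) *
        ∫ t in Ioo y₁ x, (t - y₂) ^ (β₂-1) * ((t - y₁) ^ (β₁-1) * (x - t) ^ (-(β₁+β₂-1)))) by
        rw [hKdef, hbdef]; ring]
    congr 1
    rw [← MeasureTheory.integral_const_mul]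
    refine setIntegral_congr_fun measurableSet_Ioo fun t ht => ?_
    simp only [hk, hG, hbdef]; ring
  rw [step1, MeasureTheory.integral_const_mul]
  congr 1
  -- Step c: Fubini
  have hFint : Integrable (Function.uncurry fun y₂ y₃ => k y₂ y₃ * G y₃)
      ((volume.restrict (Ioo 0 y₁)).prod (volume.restrict (Ioo y₁ x))) := by
    refine Integrable.mono' (g := fun p : ℝ × ℝ =>
        (p.1 ^ (-β₂) * (y₁ - p.1) ^ (β₂ - 1)) * G p.2) ?_ ?_ ?_
    · exact Integrable.mul_prod (k_int hβ₂0 hβ₂1 hy₁ le_rfl)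
        (G_int hβ₁0 hβ₁1 hb1 hy₁x)
    · have : Measurable (fun p : ℝ × ℝ => k p.1 p.2 * G p.2) := by
        simp only [hk, hG]; fun_prop
      exact this.aestronglyMeasurable
    · rw [Measure.prod_restrict, ae_restrict_iff' (measurableSet_Ioo.prod measurableSet_Ioo)]
      filter_upwards with p hp
      obtain ⟨⟨h01, h0y⟩, ⟨hy1, hyx⟩⟩ := hp
      have hG0 : 0 ≤ G p.2 := by
        apply mul_nonneg <;> apply Real.rpow_nonneg <;> linarith
      have hF0 : 0 ≤ k p.1 p.2 * G p.2 := by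
        refine mul_nonneg (mul_nonneg ?_ ?_) hG0 <;> apply Real.rpow_nonneg <;> linarith
      rw [Function.uncurry, Real.norm_of_nonneg hF0]
      refine mul_le_mul_of_nonneg_right ?_ hG0
      refine mul_le_mul_of_nonneg_left ?_ (Real.rpow_nonneg h01.le _)
      exact Real.rpow_le_rpow_of_nonpos (by linarith) (by linarith) (by linarith)
  have swap := MeasureTheory.integral_integral_swap hFint
  rw [swap]
  refine setIntegral_congr_fun measurableSet_Ioo fun y₃ hy₃ => ?_
  rw [← MeasureTheory.integral_mul_const]

lemma inner2_eq {β₁ β₂ x y₁ : ℝ} (hβ₁0 : 0 < β₁) (hβ₁1 : β₁ < 1)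
    (hβ₂0 : 0 < β₂) (hβ₂1 : β₂ < 1) (hb0 : 0 < β₁ + β₂ - 1) (hb1 : β₁ + β₂ - 1 < 1)
    (hy₁ : 0 < y₁) (hy₁x : y₁ < x) :
    (∫ y₂ in y₁..x, (1 - β₂) * y₂ ^ (-β₂) * PD β₁ β₂ (x - y₂) (y₂ - y₁))
      = (1 - β₂) * (Gamma (β₁ + β₂ - 1) * Gamma (1 - (β₁ + β₂ - 1)))⁻¹ *
        ∫ y₃ in Ioo y₁ x,
          (∫ y₂ in Ioo y₁ x, (Iio y₃).indicator (fun s => s ^ (-β₂) * (y₃ - s) ^ (β₂ - 1)) y₂) *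
          ((y₃ - y₁) ^ (β₁ - 1) * (x - y₃) ^ (-(β₁ + β₂ - 1))) := by
  set b : ℝ := β₁ + β₂ - 1 with hbdef
  set K : ℝ := (Gamma b * Gamma (1 - b))⁻¹ with hKdef
  set k : ℝ → ℝ → ℝ := fun y₂ y₃ => y₂ ^ (-β₂) * (y₃ - y₂) ^ (β₂ - 1) with hk
  set G : ℝ → ℝ := fun y₃ => (y₃ - y₁) ^ (β₁ - 1) * (x - y₃) ^ (-b) with hG
  set f : ℝ → ℝ → ℝ :=
    fun y₂ y₃ => {p : ℝ × ℝ | p.1 < p.2}.indicator (fun p => k p.1 p.2 * G p.2) (y₂, y₃) with hf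
  have hfy₂ : ∀ y₂, (fun y₃ => f y₂ y₃) = (Ioi y₂).indicator (fun t => k y₂ t * G t) := by
    intro y₂; funext y₃
    by_cases h : y₂ < y₃ <;> simp [hf, Set.indicator_apply, h]
  have hfy₃ : ∀ y₃ y₂, f y₂ y₃ = (Iio y₃).indicator (fun s => k s y₃) y₂ * G y₃ := by
    intro y₃ y₂
    by_cases h : y₂ < y₃ <;> simp [hf, Set.indicator_apply, h]
  -- integrability on Ioo y₂ x of the k*G integrand, for y₁ ≤ y₂ < x
  have IIkG : ∀ y₂, y₁ < y₂ → y₂ < x →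
      IntegrableOn (fun t => k y₂ t * G t) (Ioo y₂ x) volume := by
    intro y₂ hy₂1 hy₂x
    have hcont : ContinuousOn (fun t : ℝ => y₂ ^ (-β₂) * (t - y₁) ^ (β₁ - 1)) (Icc y₂ x) := by
      refine continuousOn_const.mul (ContinuousOn.rpow_const
        (continuous_id.sub continuous_const).continuousOn ?_)
      intro t ht; left; have := ht.1; intro h0; nlinarith
    have := II_both (p := β₂ - 1) (q := -b) (a := y₂) (b := x)
      (by linarith) (by linarith) hy₂x hcont
    rw [intervalIntegrable_iff_integrableOn_Ioo_of_le hy₂x.le] at this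
    have e : (fun t => (t - y₂) ^ (β₂-1) * ((x - t) ^ (-b) * (y₂ ^ (-β₂) * (t - y₁) ^ (β₁-1))))
        = fun t => k y₂ t * G t := by funext t; simp only [hk, hG]; ring
    rwa [e] at this
  have step1 : (∫ y₂ in y₁..x, (1 - β₂) * y₂ ^ (-β₂) * PD β₁ β₂ (x - y₂) (y₂ - y₁))
      = ∫ y₂ in Ioo y₁ x, (1 - β₂) * K * ∫ y₃ in Ioo y₁ x, f y₂ y₃ := by
    rw [intervalIntegral.integral_of_le hy₁x.le, MeasureTheory.integral_Ioc_eq_integral_Ioo]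
    refine setIntegral_congr_fun measurableSet_Ioo fun y₂ hy₂ => ?_
    have hPD := PD_eq (β := β₂) (γ := β₁) (u := y₁) (v := y₂) (w := x) hy₂.1 hy₂.2
    rw [hPD, intervalIntegral.integral_of_le hy₂.2.le,
      MeasureTheory.integral_Ioc_eq_integral_Ioo]
    rw [show (1 - β₂) * y₂ ^ (-β₂) * ((Gamma (β₁+β₂-1) * Gamma (1 - (β₁+β₂-1)))⁻¹ *
        ∫ t in Ioo y₂ x, (t - y₁) ^ (β₁-1) * ((t - y₂) ^ (β₂-1) * (x - t) ^ (-(β₁+β₂-1))))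
      = (1 - β₂) * K * (y₂ ^ (-β₂) *
        ∫ t in Ioo y₂ x, (t - y₁) ^ (β₁-1) * ((t - y₂) ^ (β₂-1) * (x - t) ^ (-(β₁+β₂-1)))) by
        rw [hKdef, hbdef]; ring]
    congr 1
    rw [← MeasureTheory.integral_const_mul]
    have e1 : ∫ t in Ioo y₂ x, y₂ ^ (-β₂) *
          ((t - y₁) ^ (β₁-1) * ((t - y₂) ^ (β₂-1) * (x - t) ^ (-(β₁+β₂-1))))
        = ∫ t in Ioo y₂ x, k y₂ t * G t := by
      refine setIntegral_congr_fun measurableSet_Ioo fun t ht => ?_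
      simp only [hk, hG, hbdef]; ring
    rw [e1, hfy₂ y₂, setIntegral_indicator measurableSet_Ioi, Set.Ioo_inter_Ioi,
      max_eq_right hy₂.1.le]
  rw [step1, MeasureTheory.integral_const_mul]
  congr 1
  -- Fubini for the triangle via indicators
  have hmeas : AEStronglyMeasurable (Function.uncurry f)
      ((volume.restrict (Ioo y₁ x)).prod (volume.restrict (Ioo y₁ x))) := by
    have : Measurable (Function.uncurry f) := by
      have hm : Measurable (fun p : ℝ × ℝ => k p.1 p.2 * G p.2) := by
        simp only [hk, hG]; fun_prop
      have : Function.uncurry f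
          = {p : ℝ × ℝ | p.1 < p.2}.indicator (fun p => k p.1 p.2 * G p.2) := by
        funext p; simp [Function.uncurry, hf]
      rw [this]
      exact hm.indicator (measurableSet_lt measurable_fst measurable_snd)
    exact this.aestronglyMeasurable
  have hf2int : Integrable (Function.uncurry f)
      ((volume.restrict (Ioo y₁ x)).prod (volume.restrict (Ioo y₁ x))) := by
    refine (integrable_prod_iff hmeas).2 ⟨?_, ?_⟩
    · filter_upwards [ae_restrict_mem measurableSet_Ioo] with y₂ hy₂
      simp only [Function.uncurry_apply_pair]
      rw [hfy₂ y₂]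
      rw [integrable_indicator_iff measurableSet_Ioi]
      rw [IntegrableOn, Measure.restrict_restrict measurableSet_Ioi, Set.inter_comm,
        Set.Ioo_inter_Ioi, max_eq_right hy₂.1.le]
      exact IIkG y₂ hy₂.1 hy₂.2
    · set CB : ℝ := y₁ ^ (-β₂) * (x - y₁) ^ (β₂ + (1-b) - 1) *
        (Gamma β₂ * Gamma (1-b) / Gamma (β₂ + (1-b))) with hCB
      have hCB0 : 0 ≤ CB := by
        refine mul_nonneg (mul_nonneg (Real.rpow_nonneg hy₁.le _) (Real.rpow_nonneg
          (by linarith) _)) (div_nonneg (mul_nonneg ?_ ?_) ?_)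
        · exact (Real.Gamma_pos_of_pos hβ₂0).le
        · exact (Real.Gamma_pos_of_pos (by linarith)).le
        · exact (Real.Gamma_pos_of_pos (by linarith)).le
      refine Integrable.mono' (g := fun y₂ => (y₂ - y₁) ^ (β₁ - 1) * CB) ?_ ?_ ?_
      · have := II_left (p := β₁ - 1) (a := y₁) (b := x) (by linarith)
          (h := fun _ => CB) hy₁x.le continuousOn_const
        rwa [intervalIntegrable_iff_integrableOn_Ioo_of_le hy₁x.le] at this
      · exact hmeas.norm.integral_prod_right'
      · filter_upwards [ae_restrict_mem measurableSet_Ioo] with y₂ hy₂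
        simp only [Function.uncurry_apply_pair]
        have hnn : 0 ≤ ∫ y₃ in Ioo y₁ x, ‖f y₂ y₃‖ :=
          MeasureTheory.integral_nonneg fun _ => norm_nonneg _
        rw [Real.norm_of_nonneg hnn]
        have e1 : (fun y₃ => ‖f y₂ y₃‖)
            = (Ioi y₂).indicator (fun t => ‖k y₂ t * G t‖) := by
          funext t
          rw [show f y₂ t = (Ioi y₂).indicator (fun t => k y₂ t * G t) t from
            congrFun (hfy₂ y₂) t]
          exact norm_indicator_eq_indicator_norm _ _
        rw [e1, setIntegral_indicator measurableSet_Ioi, Set.Ioo_inter_Ioi,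
          max_eq_right hy₂.1.le]
        have e2 : ∫ t in Ioo y₂ x, ‖k y₂ t * G t‖ = ∫ t in Ioo y₂ x, k y₂ t * G t := by
          refine setIntegral_congr_fun measurableSet_Ioo fun t ht => ?_
          refine Real.norm_of_nonneg ?_
          simp only [hk, hG]
          refine mul_nonneg (mul_nonneg ?_ ?_) (mul_nonneg ?_ ?_) <;>
            apply Real.rpow_nonneg <;>
            [linarith [hy₂.1, hy₁]; linarith [ht.1]; linarith [ht.1, hy₂.1]; linarith [ht.2]]
        rw [e2]
        have mono : ∫ t in Ioo y₂ x, k y₂ t * G t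
            ≤ ∫ t in Ioo y₂ x, (y₁ ^ (-β₂) * (y₂ - y₁) ^ (β₁ - 1)) *
                ((t - y₂) ^ (β₂ - 1) * (x - t) ^ (-b)) := by
          refine setIntegral_mono_on (IIkG y₂ hy₂.1 hy₂.2) ?_ measurableSet_Ioo ?_
          · refine Integrable.const_mul ?_ _
            have := II_both (p := β₂ - 1) (q := -b) (a := y₂) (b := x)
              (by linarith) (by linarith) hy₂.2 (h := fun _ => 1) continuousOn_const
            rw [intervalIntegrable_iff_integrableOn_Ioo_of_le hy₂.2.le] at this
            simpa [IntegrableOn] using this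
          · intro t ht
            simp only [hk, hG]
            have h1 : y₂ ^ (-β₂) ≤ y₁ ^ (-β₂) :=
              Real.rpow_le_rpow_of_nonpos hy₁ hy₂.1.le (by linarith)
            have h2 : (t - y₁) ^ (β₁ - 1) ≤ (y₂ - y₁) ^ (β₁ - 1) :=
              Real.rpow_le_rpow_of_nonpos (by linarith [hy₂.1]) (by linarith [ht.1])
                (by linarith)
            calc y₂ ^ (-β₂) * (t - y₂) ^ (β₂-1) * ((t - y₁) ^ (β₁-1) * (x - t) ^ (-b))
                = (y₂ ^ (-β₂) * (t - y₁) ^ (β₁-1)) * ((t - y₂) ^ (β₂-1) * (x - t) ^ (-b)) := by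
                  ring
              _ ≤ (y₁ ^ (-β₂) * (y₂ - y₁) ^ (β₁-1)) * ((t - y₂) ^ (β₂-1) * (x - t) ^ (-b)) := by
                  refine mul_le_mul_of_nonneg_right (mul_le_mul h1 h2 ?_ ?_) ?_
                  · exact Real.rpow_nonneg (by linarith [ht.1, hy₂.1]) _
                  · exact Real.rpow_nonneg hy₁.le _
                  · exact mul_nonneg (Real.rpow_nonneg (by linarith [ht.1]) _)
                      (Real.rpow_nonneg (by linarith [ht.2]) _)
        have beta : ∫ t in Ioo y₂ x, (t - y₂) ^ (β₂ - 1) * (x - t) ^ (-b)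
            = (x - y₂) ^ (β₂ + (1-b) - 1) * (Gamma β₂ * Gamma (1-b) / Gamma (β₂ + (1-b))) := by
          rw [← MeasureTheory.integral_Ioc_eq_integral_Ioo,
            ← intervalIntegral.integral_of_le hy₂.2.le]
          have := betaScaled (p := β₂) (q := 1 - b) (a := y₂) (c := x) hβ₂0
            (by linarith) hy₂.2
          rw [show (1:ℝ) - b - 1 = -b by ring] at this
          exact this
        rw [MeasureTheory.integral_const_mul, beta] at mono
        refine le_trans mono ?_
        rw [hCB]
        have hxx : (x - y₂) ^ (β₂ + (1-b) - 1) ≤ (x - y₁) ^ (β₂ + (1-b) - 1) := by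
          refine Real.rpow_le_rpow (by linarith [hy₂.2]) (by linarith [hy₂.1]) ?_
          rw [hbdef]; linarith
        have hg0 : 0 ≤ Gamma β₂ * Gamma (1-b) / Gamma (β₂ + (1-b)) := by
          refine div_nonneg (mul_nonneg ?_ ?_) ?_
          · exact (Real.Gamma_pos_of_pos hβ₂0).le
          · exact (Real.Gamma_pos_of_pos (by linarith)).le
          · exact (Real.Gamma_pos_of_pos (by linarith)).le
        calc y₁ ^ (-β₂) * (y₂ - y₁) ^ (β₁-1) *
              ((x - y₂) ^ (β₂ + (1-b) - 1) * (Gamma β₂ * Gamma (1-b) / Gamma (β₂ + (1-b))))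
            ≤ y₁ ^ (-β₂) * (y₂ - y₁) ^ (β₁-1) *
              ((x - y₁) ^ (β₂ + (1-b) - 1) * (Gamma β₂ * Gamma (1-b) / Gamma (β₂ + (1-b)))) := by
              refine mul_le_mul_of_nonneg_left (mul_le_mul_of_nonneg_right hxx hg0) ?_
              exact mul_nonneg (Real.rpow_nonneg hy₁.le _)
                (Real.rpow_nonneg (by linarith [hy₂.1]) _)
          _ = (y₂ - y₁) ^ (β₁ - 1) * (y₁ ^ (-β₂) * (x - y₁) ^ (β₂ + (1-b) - 1) *
              (Gamma β₂ * Gamma (1-b) / Gamma (β₂ + (1-b)))) := by ring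
  have swap := MeasureTheory.integral_integral_swap hf2int
  rw [swap]
  refine setIntegral_congr_fun measurableSet_Ioo fun y₃ hy₃ => ?_
  have e3 : ∫ y₂ in Ioo y₁ x, f y₂ y₃
      = ∫ y₂ in Ioo y₁ x, (Iio y₃).indicator (fun s => k s y₃) y₂ * G y₃ := by
    refine setIntegral_congr_fun measurableSet_Ioo fun y₂ _ => hfy₃ y₃ y₂
  rw [e3, MeasureTheory.integral_mul_const]

lemma kbeta {β₂ c : ℝ} (hβ₂0 : 0 < β₂) (hβ₂1 : β₂ < 1) (hc : 0 < c) :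
    ∫ y₂ in Ioo (0:ℝ) c, y₂ ^ (-β₂) * (c - y₂) ^ (β₂ - 1) = Gamma (1 - β₂) * Gamma β₂ := by
  rw [← MeasureTheory.integral_Ioc_eq_integral_Ioo, ← intervalIntegral.integral_of_le hc.le]
  have hB := betaScaled (p := 1 - β₂) (q := β₂) (a := 0) (c := c) (by linarith) hβ₂0 hc
  have e : (∫ t in (0:ℝ)..c, (t - 0) ^ (1 - β₂ - 1) * (c - t) ^ (β₂ - 1))
      = ∫ t in (0:ℝ)..c, t ^ (-β₂) * (c - t) ^ (β₂ - 1) := by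
    refine intervalIntegral.integral_congr fun t _ => ?_
    rw [sub_zero, show (1:ℝ) - β₂ - 1 = -β₂ by ring]
  rw [e] at hB
  rw [hB, sub_zero, show (1:ℝ) - β₂ + β₂ - 1 = 0 by ring, Real.rpow_zero, one_mul,
    show (1:ℝ) - β₂ + β₂ = 1 by ring, Real.Gamma_one, div_one]

lemma Esum {β₂ y₁ x y₃ : ℝ} (hβ₂0 : 0 < β₂) (hβ₂1 : β₂ < 1) (hy₁ : 0 < y₁)
    (hy₁3 : y₁ < y₃) (hy₃x : y₃ ≤ x) :
    (∫ y₂ in Ioo (0:ℝ) y₁, y₂ ^ (-β₂) * (y₃ - y₂) ^ (β₂ - 1))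
      + (∫ y₂ in Ioo y₁ x, (Iio y₃).indicator (fun s => s ^ (-β₂) * (y₃ - s) ^ (β₂ - 1)) y₂)
      = Gamma (1 - β₂) * Gamma β₂ := by
  rw [setIntegral_indicator measurableSet_Iio, Set.Ioo_inter_Iio, min_eq_right hy₃x]
  have p1 : IntervalIntegrable (fun s : ℝ => s ^ (-β₂) * (y₃ - s) ^ (β₂ - 1)) volume 0 y₁ := by
    rw [intervalIntegrable_iff_integrableOn_Ioo_of_le hy₁.le]
    exact k_int hβ₂0 hβ₂1 hy₁ hy₁3.le
  have p2 : IntervalIntegrable (fun s : ℝ => s ^ (-β₂) * (y₃ - s) ^ (β₂ - 1)) volume y₁ y₃ := by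
    have hcont : ContinuousOn (fun s : ℝ => s ^ (-β₂)) (Icc y₁ y₃) := by
      refine ContinuousOn.rpow_const continuous_id.continuousOn ?_
      intro t ht; left; have := ht.1; intro h0; nlinarith
    have := II_right (q := β₂ - 1) (a := y₁) (b := y₃) (by linarith) hy₁3.le hcont
    have e : (fun t : ℝ => (y₃ - t) ^ (β₂ - 1) * t ^ (-β₂))
        = fun s : ℝ => s ^ (-β₂) * (y₃ - s) ^ (β₂ - 1) := by funext t; ring
    rwa [e] at this
  rw [← MeasureTheory.integral_Ioc_eq_integral_Ioo, ← intervalIntegral.integral_of_le hy₁.le,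
    ← MeasureTheory.integral_Ioc_eq_integral_Ioo, ← intervalIntegral.integral_of_le hy₁3.le,
    intervalIntegral.integral_add_adjacent_intervals p1 p2,
    intervalIntegral.integral_of_le (by linarith : (0:ℝ) ≤ y₃),
    MeasureTheory.integral_Ioc_eq_integral_Ioo]
  exact kbeta hβ₂0 hβ₂1 (by linarith)

lemma innersum {β₁ β₂ x y₁ : ℝ} (hβ₁0 : 0 < β₁) (hβ₁1 : β₁ < 1)
    (hβ₂0 : 0 < β₂) (hβ₂1 : β₂ < 1) (hb0 : 0 < β₁ + β₂ - 1) (hb1 : β₁ + β₂ - 1 < 1)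
    (hy₁ : 0 < y₁) (hy₁x : y₁ < x) :
    (∫ y₂ in (0:ℝ)..y₁, (1 - β₂) * y₂ ^ (-β₂) * PD β₂ β₁ (x - y₁) (y₁ - y₂))
    + (∫ y₂ in y₁..x, (1 - β₂) * y₂ ^ (-β₂) * PD β₁ β₂ (x - y₂) (y₂ - y₁))
    = ((1 - β₂) * (Gamma (β₁+β₂-1) * Gamma (1 - (β₁+β₂-1)))⁻¹ * (Gamma (1-β₂) * Gamma β₂) *
       (Gamma β₁ * Gamma (1 - (β₁+β₂-1)) / Gamma (β₁ + (1 - (β₁+β₂-1)))))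
      * (x - y₁) ^ (1 - β₂) := by
  rw [inner1_eq hβ₁0 hβ₁1 hβ₂0 hβ₂1 hb1 hy₁ hy₁x,
    inner2_eq hβ₁0 hβ₁1 hβ₂0 hβ₂1 hb0 hb1 hy₁ hy₁x, ← mul_add]
  set b : ℝ := β₁ + β₂ - 1 with hbdef
  set Bβ : ℝ := Gamma (1 - β₂) * Gamma β₂ with hBβ
  have hBβ0 : 0 ≤ Bβ :=
    mul_nonneg (Real.Gamma_pos_of_pos (by linarith)).le (Real.Gamma_pos_of_pos hβ₂0).le
  set E₁ : ℝ → ℝ := fun y₃ => ∫ y₂ in Ioo (0:ℝ) y₁, y₂ ^ (-β₂) * (y₃ - y₂) ^ (β₂ - 1)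
    with hE₁
  set E₂ : ℝ → ℝ := fun y₃ =>
    ∫ y₂ in Ioo y₁ x, (Iio y₃).indicator (fun s => s ^ (-β₂) * (y₃ - s) ^ (β₂ - 1)) y₂ with hE₂
  set G : ℝ → ℝ := fun y₃ => (y₃ - y₁) ^ (β₁ - 1) * (x - y₃) ^ (-b) with hG
  have hGnn : ∀ y₃ ∈ Ioo y₁ x, 0 ≤ G y₃ := by
    intro y₃ hy₃
    exact mul_nonneg (Real.rpow_nonneg (by linarith [hy₃.1]) _)
      (Real.rpow_nonneg (by linarith [hy₃.2]) _)
  have hE₁nn : ∀ y₃ ∈ Ioo y₁ x, 0 ≤ E₁ y₃ := by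
    intro y₃ hy₃
    refine setIntegral_nonneg measurableSet_Ioo fun y₂ hy₂ => ?_
    exact mul_nonneg (Real.rpow_nonneg hy₂.1.le _)
      (Real.rpow_nonneg (by linarith [hy₂.2, hy₃.1]) _)
  have hE₂nn : ∀ y₃ ∈ Ioo y₁ x, 0 ≤ E₂ y₃ := by
    intro y₃ hy₃
    refine setIntegral_nonneg measurableSet_Ioo fun y₂ hy₂ => ?_
    refine Set.indicator_apply_nonneg fun hy₂3 => ?_
    exact mul_nonneg (Real.rpow_nonneg (by linarith [hy₂.1]) _)
      (Real.rpow_nonneg (by linarith [mem_Iio.1 hy₂3]) _)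
  have hE₁le : ∀ y₃ ∈ Ioo y₁ x, E₁ y₃ ≤ Bβ := by
    intro y₃ hy₃
    have h03 : (0:ℝ) < y₃ := by linarith [hy₃.1]
    rw [hBβ, ← kbeta hβ₂0 hβ₂1 h03]
    refine setIntegral_mono_set (k_int_full hβ₂0 hβ₂1 h03) ?_ ?_
    · filter_upwards [ae_restrict_mem measurableSet_Ioo] with y₂ hy₂
      exact mul_nonneg (Real.rpow_nonneg hy₂.1.le _)
        (Real.rpow_nonneg (by linarith [hy₂.2]) _)
    · exact HasSubset.Subset.eventuallyLE (Ioo_subset_Ioo le_rfl hy₃.1.le)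
  have hE₂le : ∀ y₃ ∈ Ioo y₁ x, E₂ y₃ ≤ Bβ := by
    intro y₃ hy₃
    have h03 : (0:ℝ) < y₃ := by linarith [hy₃.1]
    rw [hE₂]
    simp only []
    rw [setIntegral_indicator measurableSet_Iio, Set.Ioo_inter_Iio, min_eq_right hy₃.2.le]
    rw [hBβ, ← kbeta hβ₂0 hβ₂1 h03]
    refine setIntegral_mono_set (k_int_full hβ₂0 hβ₂1 h03) ?_ ?_
    · filter_upwards [ae_restrict_mem measurableSet_Ioo] with y₂ hy₂
      exact mul_nonneg (Real.rpow_nonneg hy₂.1.le _)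
        (Real.rpow_nonneg (by linarith [hy₂.2]) _)
    · exact HasSubset.Subset.eventuallyLE (Ioo_subset_Ioo hy₁.le le_rfl)
  have mE₁ : StronglyMeasurable E₁ := by
    have hm : Measurable (fun q : ℝ × ℝ => q.2 ^ (-β₂) * (q.1 - q.2) ^ (β₂ - 1)) := by fun_prop
    exact hm.stronglyMeasurable.integral_prod_right'
  have mE₂ : StronglyMeasurable E₂ := by
    have hm : Measurable (fun q : ℝ × ℝ =>
        {p : ℝ × ℝ | p.2 < p.1}.indicator (fun p => p.2 ^ (-β₂) * (p.1 - p.2) ^ (β₂ - 1)) q) := by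
      refine Measurable.indicator (by fun_prop) (measurableSet_lt measurable_snd measurable_fst)
    have e : E₂ = fun y₃ => ∫ y₂ in Ioo y₁ x,
        {p : ℝ × ℝ | p.2 < p.1}.indicator
          (fun p => p.2 ^ (-β₂) * (p.1 - p.2) ^ (β₂ - 1)) (y₃, y₂) := by
      funext y₃
      refine MeasureTheory.integral_congr_ae (Filter.Eventually.of_forall fun y₂ => ?_)
      by_cases h : y₂ < y₃ <;> simp [Set.indicator_apply, h]
    rw [e]
    exact hm.stronglyMeasurable.integral_prod_right'
  have mG : StronglyMeasurable G := by
    have : Measurable G := by simp only [hG]; fun_prop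
    exact this.stronglyMeasurable
  have intG : IntegrableOn G (Ioo y₁ x) volume := G_int hβ₁0 hβ₁1 hb1 hy₁x
  have intE₁G : Integrable (fun y₃ => E₁ y₃ * G y₃) (volume.restrict (Ioo y₁ x)) := by
    refine Integrable.mono' (g := fun y₃ => Bβ * G y₃) (intG.const_mul Bβ)
      ((mE₁.mul mG).aestronglyMeasurable) ?_
    filter_upwards [ae_restrict_mem measurableSet_Ioo] with y₃ hy₃
    rw [Real.norm_of_nonneg (mul_nonneg (hE₁nn _ hy₃) (hGnn _ hy₃))]
    exact mul_le_mul_of_nonneg_right (hE₁le _ hy₃) (hGnn _ hy₃)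
  have intE₂G : Integrable (fun y₃ => E₂ y₃ * G y₃) (volume.restrict (Ioo y₁ x)) := by
    refine Integrable.mono' (g := fun y₃ => Bβ * G y₃) (intG.const_mul Bβ)
      ((mE₂.mul mG).aestronglyMeasurable) ?_
    filter_upwards [ae_restrict_mem measurableSet_Ioo] with y₃ hy₃
    rw [Real.norm_of_nonneg (mul_nonneg (hE₂nn _ hy₃) (hGnn _ hy₃))]
    exact mul_le_mul_of_nonneg_right (hE₂le _ hy₃) (hGnn _ hy₃)
  have add1 : (∫ y₃ in Ioo y₁ x, E₁ y₃ * G y₃) + (∫ y₃ in Ioo y₁ x, E₂ y₃ * G y₃)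
      = ∫ y₃ in Ioo y₁ x, Bβ * G y₃ := by
    rw [← MeasureTheory.integral_add intE₁G intE₂G]
    refine setIntegral_congr_fun measurableSet_Ioo fun y₃ hy₃ => ?_
    rw [← add_mul]
    congr 1
    exact Esum hβ₂0 hβ₂1 hy₁ hy₃.1 hy₃.2.le
  have Gval : ∫ y₃ in Ioo y₁ x, G y₃
      = (x - y₁) ^ (1 - β₂) * (Gamma β₁ * Gamma (1 - b) / Gamma (β₁ + (1 - b))) := by
    rw [← MeasureTheory.integral_Ioc_eq_integral_Ioo,
      ← intervalIntegral.integral_of_le hy₁x.le]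
    have hB := betaScaled (p := β₁) (q := 1 - b) (a := y₁) (c := x) hβ₁0 (by linarith) hy₁x
    have e : (∫ t in y₁..x, (t - y₁) ^ (β₁ - 1) * (x - t) ^ (1 - b - 1)) = ∫ t in y₁..x, G t := by
      refine intervalIntegral.integral_congr fun t _ => ?_
      rw [hG, show (1:ℝ) - b - 1 = -b by ring]
    rw [e] at hB
    rw [hB, show β₁ + (1 - b) - 1 = 1 - β₂ by rw [hbdef]; ring]
  rw [add1, MeasureTheory.integral_const_mul, Gval, hBβ]
  simp only [hbdef]
  ring

lemma PD_nonneg {γ β X A : ℝ} (hg0 : 0 < γ + β - 1) (hg1 : γ + β - 1 < 1)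
    (hX : 0 ≤ X) (hA : 0 ≤ A) : 0 ≤ PD γ β X A := by
  rw [PD]
  refine mul_nonneg (inv_nonneg.2 (mul_nonneg (Real.Gamma_pos_of_pos hg0).le
    (Real.Gamma_pos_of_pos (by linarith)).le)) ?_
  refine intervalIntegral.integral_nonneg zero_le_one fun u hu => ?_
  refine mul_nonneg (mul_nonneg ?_ ?_) ?_ <;> apply Real.rpow_nonneg
  · exact add_nonneg (div_nonneg hA hX) hu.1
  · exact hu.1
  · linarith [hu.2]

set_option maxHeartbeats 2000000 in
/-- The double-integral computation from the proof of Corollary `coro:1`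
(case `ℓ = 2`): for `x ∈ (0,1]`, the sum of the two double integrals equals
`x^{1−β*} Γ(β₁)Γ(2−β₁)Γ(β₂)Γ(2−β₂) / (Γ(β*)Γ(2−β*))`, `β* = β₁+β₂−1`. -/
theorem stmt9 (β₁ β₂ : ℝ) (h₁ : β₁ ∈ Set.Ioo (0 : ℝ) 1) (h₂ : β₂ ∈ Set.Ioo (0 : ℝ) 1)
    (hs : β₁ + β₂ - 1 ∈ Set.Ioo (0 : ℝ) 1) (x : ℝ) (hx : x ∈ Set.Ioc (0 : ℝ) 1) :
    (∫ y₁ in (0 : ℝ)..x, (1 - β₁) * y₁ ^ (-β₁) *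
        ∫ y₂ in (0 : ℝ)..y₁, (1 - β₂) * y₂ ^ (-β₂) * PD β₂ β₁ (x - y₁) (y₁ - y₂)) +
      (∫ y₁ in (0 : ℝ)..x, (1 - β₁) * y₁ ^ (-β₁) *
        ∫ y₂ in y₁..x, (1 - β₂) * y₂ ^ (-β₂) * PD β₁ β₂ (x - y₂) (y₂ - y₁)) =
    x ^ (1 - (β₁ + β₂ - 1)) *
      (Gamma β₁ * Gamma (2 - β₁) * Gamma β₂ * Gamma (2 - β₂)) /
      (Gamma (β₁ + β₂ - 1) * Gamma (2 - (β₁ + β₂ - 1))) := by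
  obtain ⟨hβ₁0, hβ₁1⟩ := h₁
  obtain ⟨hβ₂0, hβ₂1⟩ := h₂
  obtain ⟨hb0, hb1⟩ := hs
  obtain ⟨hx0, hx1⟩ := hx
  set I1 : ℝ → ℝ := fun y₁ =>
    ∫ y₂ in (0:ℝ)..y₁, (1 - β₂) * y₂ ^ (-β₂) * PD β₂ β₁ (x - y₁) (y₁ - y₂) with hI1
  set I2 : ℝ → ℝ := fun y₁ =>
    ∫ y₂ in y₁..x, (1 - β₂) * y₂ ^ (-β₂) * PD β₁ β₂ (x - y₂) (y₂ - y₁) with hI2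
  set C₂ : ℝ := (1 - β₂) * (Gamma (β₁+β₂-1) * Gamma (1 - (β₁+β₂-1)))⁻¹ *
    (Gamma (1-β₂) * Gamma β₂) *
    (Gamma β₁ * Gamma (1 - (β₁+β₂-1)) / Gamma (β₁ + (1 - (β₁+β₂-1)))) with hC₂
  have hC₂nn : 0 ≤ C₂ := by
    rw [hC₂]
    have g1 := Real.Gamma_pos_of_pos hb0
    have g2 := Real.Gamma_pos_of_pos (show (0:ℝ) < 1 - (β₁+β₂-1) by linarith)
    have g3 := Real.Gamma_pos_of_pos (show (0:ℝ) < 1 - β₂ by linarith)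
    have g4 := Real.Gamma_pos_of_pos hβ₂0
    have g5 := Real.Gamma_pos_of_pos hβ₁0
    have g6 := Real.Gamma_pos_of_pos (show (0:ℝ) < β₁ + (1 - (β₁+β₂-1)) by linarith)
    have h12 : (0:ℝ) < 1 - β₂ := by linarith
    positivity
  have hsum : ∀ y₁ ∈ Ioo (0:ℝ) x, I1 y₁ + I2 y₁ = C₂ * (x - y₁) ^ (1 - β₂) := by
    intro y₁ hy₁
    exact innersum hβ₁0 hβ₁1 hβ₂0 hβ₂1 hb0 hb1 hy₁.1 hy₁.2
  have h1nn : ∀ y₁ ∈ Ioo (0:ℝ) x, 0 ≤ I1 y₁ := by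
    intro y₁ hy₁
    refine intervalIntegral.integral_nonneg hy₁.1.le fun y₂ hy₂ => ?_
    refine mul_nonneg (mul_nonneg (by linarith) (Real.rpow_nonneg hy₂.1 _)) ?_
    exact PD_nonneg (by linarith) (by linarith) (by linarith [hy₁.2]) (by linarith [hy₂.2])
  have h2nn : ∀ y₁ ∈ Ioo (0:ℝ) x, 0 ≤ I2 y₁ := by
    intro y₁ hy₁
    refine intervalIntegral.integral_nonneg hy₁.2.le fun y₂ hy₂ => ?_
    refine mul_nonneg (mul_nonneg (by linarith) (Real.rpow_nonneg (by linarith [hy₂.1, hy₁.1]) _)) ?_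
    exact PD_nonneg (by linarith) (by linarith) (by linarith [hy₂.2]) (by linarith [hy₂.1])
  have h1le : ∀ y₁ ∈ Ioo (0:ℝ) x, I1 y₁ ≤ C₂ * (x - y₁) ^ (1 - β₂) := by
    intro y₁ hy₁; have := hsum y₁ hy₁; have := h2nn y₁ hy₁; linarith
  have h2le : ∀ y₁ ∈ Ioo (0:ℝ) x, I2 y₁ ≤ C₂ * (x - y₁) ^ (1 - β₂) := by
    intro y₁ hy₁; have := hsum y₁ hy₁; have := h1nn y₁ hy₁; linarith
  -- measurability of the two nested integrands
  have mPD1 : Measurable (fun p : ℝ × ℝ => PD β₂ β₁ (x - p.1) (p.1 - p.2)) := by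
    have e : (fun p : ℝ × ℝ => PD β₂ β₁ (x - p.1) (p.1 - p.2))
        = fun p => (Gamma (β₂+β₁-1) * Gamma (1-(β₂+β₁-1)))⁻¹ *
          ∫ u in Ioc (0:ℝ) 1,
            ((p.1-p.2)/(x-p.1) + u) ^ (β₂-1) * u ^ (β₁-1) * (1-u) ^ (-(β₂+β₁-1)) := by
      funext p; rw [PD, intervalIntegral.integral_of_le zero_le_one]
    rw [e]
    refine Measurable.const_mul ?_ _
    have hm : Measurable (fun q : (ℝ×ℝ)×ℝ =>
        ((q.1.1-q.1.2)/(x-q.1.1) + q.2) ^ (β₂-1) * q.2 ^ (β₁-1) * (1-q.2) ^ (-(β₂+β₁-1))) := by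
      fun_prop
    exact hm.stronglyMeasurable.integral_prod_right'.measurable
  have mPD2 : Measurable (fun p : ℝ × ℝ => PD β₁ β₂ (x - p.2) (p.2 - p.1)) := by
    have e : (fun p : ℝ × ℝ => PD β₁ β₂ (x - p.2) (p.2 - p.1))
        = fun p => (Gamma (β₁+β₂-1) * Gamma (1-(β₁+β₂-1)))⁻¹ *
          ∫ u in Ioc (0:ℝ) 1,
            ((p.2-p.1)/(x-p.2) + u) ^ (β₁-1) * u ^ (β₂-1) * (1-u) ^ (-(β₁+β₂-1)) := by
      funext p; rw [PD, intervalIntegral.integral_of_le zero_le_one]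
    rw [e]
    refine Measurable.const_mul ?_ _
    have hm : Measurable (fun q : (ℝ×ℝ)×ℝ =>
        ((q.1.2-q.1.1)/(x-q.1.2) + q.2) ^ (β₁-1) * q.2 ^ (β₂-1) * (1-q.2) ^ (-(β₁+β₂-1))) := by
      fun_prop
    exact hm.stronglyMeasurable.integral_prod_right'.measurable
  have mI1 : AEStronglyMeasurable (fun y₁ => (1 - β₁) * y₁ ^ (-β₁) * I1 y₁)
      (volume.restrict (Ioo 0 x)) := by
    have hm2 : Measurable (fun q : ℝ×ℝ => {p : ℝ×ℝ | p.2 ∈ Ioc 0 p.1}.indicator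
        (fun p => (1-β₂) * p.2 ^ (-β₂) * PD β₂ β₁ (x-p.1) (p.1-p.2)) q) := by
      refine Measurable.indicator (Measurable.mul (by fun_prop) mPD1) ?_
      have : {p : ℝ×ℝ | p.2 ∈ Ioc 0 p.1} = {p : ℝ×ℝ | 0 < p.2} ∩ {p : ℝ×ℝ | p.2 ≤ p.1} := by
        ext p; simp [Set.mem_Ioc, Set.mem_setOf_eq, Set.mem_inter_iff]
      rw [this]
      exact (measurableSet_lt measurable_const measurable_snd).inter
        (measurableSet_le measurable_snd measurable_fst)
    have hΦm : Measurable (fun y₁ : ℝ => (1 - β₁) * y₁ ^ (-β₁) *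
        ∫ y₂ in Ioc (0:ℝ) x, {p : ℝ×ℝ | p.2 ∈ Ioc 0 p.1}.indicator
          (fun p => (1-β₂) * p.2 ^ (-β₂) * PD β₂ β₁ (x-p.1) (p.1-p.2)) (y₁, y₂)) := by
      refine Measurable.mul (by fun_prop) ?_
      exact hm2.stronglyMeasurable.integral_prod_right'.measurable
    refine hΦm.aestronglyMeasurable.congr ?_
    filter_upwards [ae_restrict_mem measurableSet_Ioo] with y₁ hy₁
    have e1 : (fun y₂ : ℝ => {p : ℝ×ℝ | p.2 ∈ Ioc 0 p.1}.indicator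
          (fun p => (1-β₂) * p.2 ^ (-β₂) * PD β₂ β₁ (x-p.1) (p.1-p.2)) (y₁, y₂))
        = (Ioc 0 y₁).indicator (fun y₂ => (1-β₂) * y₂ ^ (-β₂) * PD β₂ β₁ (x-y₁) (y₁-y₂)) := by
      funext y₂; rfl
    rw [e1, setIntegral_indicator measurableSet_Ioc, Set.Ioc_inter_Ioc, max_self,
      min_eq_right hy₁.2.le]
    rw [hI1]
    simp only []
    rw [intervalIntegral.integral_of_le hy₁.1.le]
  have mI2 : AEStronglyMeasurable (fun y₁ => (1 - β₁) * y₁ ^ (-β₁) * I2 y₁)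
      (volume.restrict (Ioo 0 x)) := by
    have hm2 : Measurable (fun q : ℝ×ℝ => {p : ℝ×ℝ | p.2 ∈ Ioc p.1 x}.indicator
        (fun p => (1-β₂) * p.2 ^ (-β₂) * PD β₁ β₂ (x-p.2) (p.2-p.1)) q) := by
      refine Measurable.indicator (Measurable.mul (by fun_prop) mPD2) ?_
      have : {p : ℝ×ℝ | p.2 ∈ Ioc p.1 x} = {p : ℝ×ℝ | p.1 < p.2} ∩ {p : ℝ×ℝ | p.2 ≤ x} := by
        ext p; simp [Set.mem_Ioc, Set.mem_setOf_eq, Set.mem_inter_iff]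
      rw [this]
      exact (measurableSet_lt measurable_fst measurable_snd).inter
        (measurableSet_le measurable_snd measurable_const)
    have hΦm : Measurable (fun y₁ : ℝ => (1 - β₁) * y₁ ^ (-β₁) *
        ∫ y₂ in Ioc (0:ℝ) x, {p : ℝ×ℝ | p.2 ∈ Ioc p.1 x}.indicator
          (fun p => (1-β₂) * p.2 ^ (-β₂) * PD β₁ β₂ (x-p.2) (p.2-p.1)) (y₁, y₂)) := by
      refine Measurable.mul (by fun_prop) ?_
      exact hm2.stronglyMeasurable.integral_prod_right'.measurable
    refine hΦm.aestronglyMeasurable.congr ?_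
    filter_upwards [ae_restrict_mem measurableSet_Ioo] with y₁ hy₁
    have e1 : (fun y₂ : ℝ => {p : ℝ×ℝ | p.2 ∈ Ioc p.1 x}.indicator
          (fun p => (1-β₂) * p.2 ^ (-β₂) * PD β₁ β₂ (x-p.2) (p.2-p.1)) (y₁, y₂))
        = (Ioc y₁ x).indicator (fun y₂ => (1-β₂) * y₂ ^ (-β₂) * PD β₁ β₂ (x-y₂) (y₂-y₁)) := by
      funext y₂; rfl
    rw [e1, setIntegral_indicator measurableSet_Ioc, Set.Ioc_inter_Ioc, max_comm,
      max_eq_left hy₁.1.le, min_self]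
    rw [hI2]
    simp only []
    rw [intervalIntegral.integral_of_le hy₁.2.le]
  -- integrable bound
  have bint : Integrable (fun y₁ : ℝ => y₁ ^ (-β₁) * (((1-β₁) * C₂) * (x - y₁) ^ (1 - β₂)))
      (volume.restrict (Ioo 0 x)) := by
    have hcont : ContinuousOn (fun t : ℝ => ((1-β₁) * C₂) * (x - t) ^ (1 - β₂)) (Icc 0 x) := by
      refine continuousOn_const.mul (ContinuousOn.rpow_const
        (continuous_const.sub continuous_id).continuousOn fun t _ => Or.inr (by linarith)) 
    have := II_left (p := -β₁) (a := 0) (b := x) (by linarith) hx0.le hcont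
    rw [intervalIntegrable_iff_integrableOn_Ioo_of_le hx0.le] at this
    simpa [IntegrableOn] using this
  have int1 : Integrable (fun y₁ => (1 - β₁) * y₁ ^ (-β₁) * I1 y₁)
      (volume.restrict (Ioo 0 x)) := by
    refine Integrable.mono' bint mI1 ?_
    filter_upwards [ae_restrict_mem measurableSet_Ioo] with y₁ hy₁
    rw [Real.norm_of_nonneg (mul_nonneg (mul_nonneg (by linarith)
      (Real.rpow_nonneg hy₁.1.le _)) (h1nn y₁ hy₁))]
    calc (1 - β₁) * y₁ ^ (-β₁) * I1 y₁
        ≤ (1 - β₁) * y₁ ^ (-β₁) * (C₂ * (x - y₁) ^ (1 - β₂)) := by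
          refine mul_le_mul_of_nonneg_left (h1le y₁ hy₁) ?_
          exact mul_nonneg (by linarith) (Real.rpow_nonneg hy₁.1.le _)
      _ = y₁ ^ (-β₁) * (((1-β₁) * C₂) * (x - y₁) ^ (1 - β₂)) := by ring
  have int2 : Integrable (fun y₁ => (1 - β₁) * y₁ ^ (-β₁) * I2 y₁)
      (volume.restrict (Ioo 0 x)) := by
    refine Integrable.mono' bint mI2 ?_
    filter_upwards [ae_restrict_mem measurableSet_Ioo] with y₁ hy₁
    rw [Real.norm_of_nonneg (mul_nonneg (mul_nonneg (by linarith)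
      (Real.rpow_nonneg hy₁.1.le _)) (h2nn y₁ hy₁))]
    calc (1 - β₁) * y₁ ^ (-β₁) * I2 y₁
        ≤ (1 - β₁) * y₁ ^ (-β₁) * (C₂ * (x - y₁) ^ (1 - β₂)) := by
          refine mul_le_mul_of_nonneg_left (h2le y₁ hy₁) ?_
          exact mul_nonneg (by linarith) (Real.rpow_nonneg hy₁.1.le _)
      _ = y₁ ^ (-β₁) * (((1-β₁) * C₂) * (x - y₁) ^ (1 - β₂)) := by ring
  -- put everything together
  rw [intervalIntegral.integral_of_le hx0.le, intervalIntegral.integral_of_le hx0.le,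
    MeasureTheory.integral_Ioc_eq_integral_Ioo, MeasureTheory.integral_Ioc_eq_integral_Ioo,
    ← MeasureTheory.integral_add int1 int2]
  have efin : ∫ y₁ in Ioo (0:ℝ) x, ((1 - β₁) * y₁ ^ (-β₁) * I1 y₁
        + (1 - β₁) * y₁ ^ (-β₁) * I2 y₁)
      = ∫ y₁ in Ioo (0:ℝ) x, ((1-β₁) * C₂) * (y₁ ^ (-β₁) * (x - y₁) ^ (1 - β₂)) := by
    refine setIntegral_congr_fun measurableSet_Ioo fun y₁ hy₁ => ?_
    rw [← mul_add, hsum y₁ hy₁]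
    ring
  rw [efin, MeasureTheory.integral_const_mul]
  have beta : ∫ y₁ in Ioo (0:ℝ) x, y₁ ^ (-β₁) * (x - y₁) ^ (1 - β₂)
      = x ^ (1 - (β₁+β₂-1)) *
        (Gamma (1-β₁) * Gamma (2-β₂) / Gamma ((1-β₁) + (2-β₂))) := by
    rw [← MeasureTheory.integral_Ioc_eq_integral_Ioo, ← intervalIntegral.integral_of_le hx0.le]
    have hB := betaScaled (p := 1-β₁) (q := 2-β₂) (a := 0) (c := x)
      (by linarith) (by linarith) hx0
    have e : (∫ t in (0:ℝ)..x, (t - 0) ^ (1-β₁-1) * (x - t) ^ (2-β₂-1))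
        = ∫ t in (0:ℝ)..x, t ^ (-β₁) * (x - t) ^ (1-β₂) := by
      refine intervalIntegral.integral_congr fun t _ => ?_
      rw [sub_zero, show (1:ℝ)-β₁-1 = -β₁ by ring, show (2:ℝ)-β₂-1 = 1-β₂ by ring]
    rw [e] at hB
    rw [hB, sub_zero, show (1:ℝ)-β₁+(2-β₂)-1 = 1 - (β₁+β₂-1) by ring]
  rw [beta]
  -- final Gamma algebra
  have gb := Real.Gamma_pos_of_pos hb0
  have g1b := Real.Gamma_pos_of_pos (show (0:ℝ) < 1 - (β₁+β₂-1) by linarith)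
  have g2 := Real.Gamma_pos_of_pos (show (0:ℝ) < 1 - β₂ by linarith)
  have e1 : Gamma (2 - β₁) = (1 - β₁) * Gamma (1 - β₁) := by
    rw [show (2:ℝ) - β₁ = (1 - β₁) + 1 by ring,
      Real.Gamma_add_one (by linarith : (1:ℝ) - β₁ ≠ 0)]
  have e2 : Gamma (2 - β₂) = (1 - β₂) * Gamma (1 - β₂) := by
    rw [show (2:ℝ) - β₂ = (1 - β₂) + 1 by ring,
      Real.Gamma_add_one (by linarith : (1:ℝ) - β₂ ≠ 0)]
  have e3 : Gamma (2 - (β₁+β₂-1)) = (1 - (β₁+β₂-1)) * Gamma (1 - (β₁+β₂-1)) := by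
    rw [show (2:ℝ) - (β₁+β₂-1) = (1 - (β₁+β₂-1)) + 1 by ring,
      Real.Gamma_add_one (by linarith : (1:ℝ) - (β₁+β₂-1) ≠ 0)]
  have e4 : Gamma ((1-β₁) + (2-β₂)) = (1 - (β₁+β₂-1)) * Gamma (1 - (β₁+β₂-1)) := by
    rw [show (1:ℝ)-β₁+(2-β₂) = (1 - (β₁+β₂-1)) + 1 by ring,
      Real.Gamma_add_one (by linarith : (1:ℝ) - (β₁+β₂-1) ≠ 0)]
  have e5 : Gamma (β₁ + (1 - (β₁+β₂-1))) = (1 - β₂) * Gamma (1 - β₂) := by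
    rw [show β₁ + ((1:ℝ) - (β₁+β₂-1)) = (1 - β₂) + 1 by ring,
      Real.Gamma_add_one (by linarith : (1:ℝ) - β₂ ≠ 0)]
  rw [hC₂, e1, e2, e3, e4, e5]
  have n1 : (1:ℝ) - β₂ ≠ 0 := by linarith
  have n2 : (1:ℝ) - (β₁+β₂-1) ≠ 0 := by linarith
  field_simp [gb.ne', g1b.ne', g2.ne', n1, n2]
end
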